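/- arXiv:2101.05676 — 4 statements merged into one kernel-verified Lean document; each statement's English description precedes it below -/
import Mathlib

section
/- Specializing all initial cluster variables x_{ij} for (i,j) in a triangulation T and all frozen variables x_{i,i+1} to 1 sends each cluster variable x_{kl} of the type A_{n-3} cluster algebra to the corresponding entry a_{kl} of the closed integral frieze associated to T. -/
attribute [local instance] Classical.propDecidable

/-- A triangulation of a convex `n`-gon with vertices labelled by `ZMod n` (in cyclic order):
a maximal collection of pairwise non-crossing diagonals, i.e. `n - 3` of them. -/
structure PolygonTriangulation (n : ℕ) [NeZero n] where
  diags : Finset (ZMod n × ZMod n)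
  lt_of_mem : ∀ d ∈ diags, d.1.val < d.2.val
  not_boundary : ∀ d ∈ diags, d.1.val + 1 < d.2.val ∧ ¬(d.1.val = 0 ∧ d.2.val = n - 1)
  noncrossing : ∀ d ∈ diags, ∀ e ∈ diags,
    ¬(d.1.val < e.1.val ∧ e.1.val < d.2.val ∧ d.2.val < e.2.val)
  card_diags : diags.card = n - 3

/-- `i` and `j` are joined by an edge of the triangulation: a diagonal or a boundary edge. -/
def IsTriEdge {n : ℕ} [NeZero n] (T : PolygonTriangulation n) (i j : ZMod n) : Prop :=
  (i, j) ∈ T.diags ∨ (j, i) ∈ T.diags ∨ j = i + 1 ∨ i = j + 1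

/-- The triangles of a triangulation, as 3-element vertex sets all of whose sides are edges. -/
noncomputable def triangles {n : ℕ} [NeZero n] (T : PolygonTriangulation n) :
    Finset (Finset (ZMod n)) :=
  Finset.univ.filter (fun s => s.card = 3 ∧ ∀ i ∈ s, ∀ j ∈ s, i ≠ j → IsTriEdge T i j)

/-- The number of triangles of the triangulation incident with vertex `v`. -/
noncomputable def triCount {n : ℕ} [NeZero n] (T : PolygonTriangulation n) (v : ZMod n) : ℕ :=
  ((triangles T).filter (fun s => v ∈ s)).card
/-- The set of vertices strictly between `i` and `j` in clockwise cyclic order. -/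
noncomputable def strictInterval (n : ℕ) [NeZero n] (i j : ZMod n) : Finset (ZMod n) :=
  Finset.univ.filter (fun k => k ≠ i ∧ k ≠ j ∧ (k - i).val < (j - i).val)

/-- The number of matchings between the vertices strictly between `i` and `j` and the
triangles of `T`: injective maps assigning to each such vertex a triangle incident with it. -/
noncomputable def matchNum {n : ℕ} [NeZero n] (T : PolygonTriangulation n) (i j : ZMod n) : ℕ :=
  Nat.card {f : strictInterval n i j → {s // s ∈ triangles T} //
    Function.Injective f ∧ ∀ v, (v : ZMod n) ∈ (f v : Finset (ZMod n))}

set_option linter.unusedSectionVars false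
section
variable {n : ℕ} [NeZero n]

def zbtw (i w j : ZMod n) : Prop := w ≠ i ∧ w ≠ j ∧ (w - i).val < (j - i).val

lemma val_inj' {a b : ZMod n} (h : a.val = b.val) : a = b := ZMod.val_injective n h

lemma ne_iff_val_ne {a b : ZMod n} : a ≠ b ↔ a.val ≠ b.val :=
  ⟨fun h h' => h (val_inj' h'), fun h h' => h (h' ▸ rfl)⟩

lemma val_sub' (a b : ZMod n) :
    (a - b).val = if b.val ≤ a.val then a.val - b.val else a.val + n - b.val := by
  split_ifs with h
  · exact ZMod.val_sub h
  · push_neg at h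
    have hb0 : b ≠ 0 := by
      intro hb; rw [hb, ZMod.val_zero] at h; omega
    have : a - b = a + (-b) := by ring
    rw [this, ZMod.val_add, ZMod.neg_val, if_neg hb0]
    have ha := ZMod.val_lt a
    have hb := ZMod.val_lt b
    rw [Nat.mod_eq_of_lt (by omega)]
    omega

lemma zbtw_iff {i w j : ZMod n} :
    zbtw i w j ↔ (i.val < w.val ∧ w.val < j.val) ∨ (j.val < i.val ∧ i.val < w.val) ∨
      (w.val < j.val ∧ j.val < i.val) := by
  have hi := ZMod.val_lt i
  have hw := ZMod.val_lt w
  have hj := ZMod.val_lt j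
  constructor
  · rintro ⟨h1, h2, h3⟩
    rw [ne_iff_val_ne] at h1 h2
    rw [val_sub', val_sub'] at h3
    split_ifs at h3 <;> omega
  · intro h
    have hwi : w ≠ i := by rw [ne_iff_val_ne]; omega
    have hwj : w ≠ j := by rw [ne_iff_val_ne]; omega
    refine ⟨hwi, hwj, ?_⟩
    rw [val_sub', val_sub']
    split_ifs <;> omega

/-- chords of the sub-polygon on vertex set `S`. -/
def ChordOK (S : Finset (ZMod n)) (d : ZMod n × ZMod n) : Prop :=
  d.1 ∈ S ∧ d.2 ∈ S ∧ d.1.val < d.2.val ∧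
    (∃ w ∈ S, zbtw d.1 w d.2) ∧ (∃ w ∈ S, zbtw d.2 w d.1)

def NC (F : Finset (ZMod n × ZMod n)) : Prop :=
  ∀ d ∈ F, ∀ e ∈ F, ¬(d.1.val < e.1.val ∧ e.1.val < d.2.val ∧ d.2.val < e.2.val)

lemma max_chords : ∀ N (S : Finset (ZMod n)) (F : Finset (ZMod n × ZMod n)),
    S.card ≤ N → 3 ≤ S.card → (∀ d ∈ F, ChordOK S d) → NC F → F.card + 3 ≤ S.card := by
  intro N
  induction N with
  | zero => intro S F h1 h2 _ _; omega
  | succ N ih =>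
    intro S F hSN hS3 hok hnc
    rcases F.eq_empty_or_nonempty with rfl | ⟨d, hd⟩
    · simpa using hS3
    obtain ⟨ha, hb, hab, ⟨w₁, hw₁S, hw₁⟩, ⟨w₂, hw₂S, hw₂⟩⟩ := hok d hd
    set a := d.1 with ha_def
    set b := d.2 with hb_def
    -- linearize the witnesses
    have hw₁' : a.val < w₁.val ∧ w₁.val < b.val := by
      rw [zbtw_iff] at hw₁; omega
    have hw₂' : w₂.val < a.val ∨ b.val < w₂.val := by
      rw [zbtw_iff] at hw₂; omega
    set S₁ := S.filter (fun w => a.val ≤ w.val ∧ w.val ≤ b.val) with hS₁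
    set S₂ := S.filter (fun w => w.val ≤ a.val ∨ b.val ≤ w.val) with hS₂
    set F₁ := (F.erase d).filter (fun e => a.val ≤ e.1.val ∧ e.2.val ≤ b.val) with hF₁
    set F₂ := (F.erase d).filter (fun e => ¬(a.val ≤ e.1.val ∧ e.2.val ≤ b.val)) with hF₂
    have hcards : S₁.card + S₂.card = S.card + 2 := by
      have hu : S₁ ∪ S₂ = S := by
        ext w
        simp only [hS₁, hS₂, Finset.mem_union, Finset.mem_filter]
        constructor
        · rintro (⟨h, _⟩ | ⟨h, _⟩) <;> exact h
        · intro h; by_cases hc : a.val ≤ w.val ∧ w.val ≤ b.val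
          · exact Or.inl ⟨h, hc⟩
          · exact Or.inr ⟨h, by omega⟩
      have hi : S₁ ∩ S₂ = {a, b} := by
        ext w
        simp only [hS₁, hS₂, Finset.mem_inter, Finset.mem_filter, Finset.mem_insert,
          Finset.mem_singleton]
        constructor
        · rintro ⟨⟨hwS, h1, h2⟩, -, h3⟩
          rcases h3 with h3 | h3
          · exact Or.inl (val_inj' (by omega))
          · exact Or.inr (val_inj' (by omega))
        · rintro (rfl | rfl)
          · exact ⟨⟨ha, le_refl _, le_of_lt hab⟩, ⟨ha, Or.inl (le_refl _)⟩⟩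
          · exact ⟨⟨hb, le_of_lt hab, le_refl _⟩, ⟨hb, Or.inr (le_refl _)⟩⟩
      have := Finset.card_union_add_card_inter S₁ S₂
      rw [hu, hi] at this
      have hab' : a ≠ b := ne_iff_val_ne.mpr (by omega)
      rw [Finset.card_insert_of_notMem (by simpa using hab'), Finset.card_singleton] at this
      omega
    have hS₁3 : 3 ≤ S₁.card := by
      have hsub : ({a, w₁, b} : Finset (ZMod n)) ⊆ S₁ := by
        intro w hw
        simp only [Finset.mem_insert, Finset.mem_singleton] at hw
        rcases hw with rfl | rfl | rfl <;>
          simp only [hS₁, Finset.mem_filter] <;> refine ⟨by assumption, by omega⟩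
      have hcard : ({a, w₁, b} : Finset (ZMod n)).card = 3 := by
        rw [Finset.card_insert_of_notMem, Finset.card_insert_of_notMem,
          Finset.card_singleton]
        · simpa using ne_iff_val_ne.mpr (by omega : w₁.val ≠ b.val)
        · simp only [Finset.mem_insert, Finset.mem_singleton]
          push_neg
          exact ⟨ne_iff_val_ne.mpr (by omega), ne_iff_val_ne.mpr (by omega)⟩
      calc 3 = ({a, w₁, b} : Finset (ZMod n)).card := hcard.symm
        _ ≤ S₁.card := Finset.card_le_card hsub
    have hS₂3 : 3 ≤ S₂.card := by
      have hsub : ({a, w₂, b} : Finset (ZMod n)) ⊆ S₂ := by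
        intro w hw
        simp only [Finset.mem_insert, Finset.mem_singleton] at hw
        rcases hw with rfl | rfl | rfl <;>
          simp only [hS₂, Finset.mem_filter] <;> refine ⟨by assumption, by omega⟩
      have hcard : ({a, w₂, b} : Finset (ZMod n)).card = 3 := by
        rw [Finset.card_insert_of_notMem, Finset.card_insert_of_notMem,
          Finset.card_singleton]
        · simpa using ne_iff_val_ne.mpr (by omega : w₂.val ≠ b.val)
        · simp only [Finset.mem_insert, Finset.mem_singleton]
          push_neg
          exact ⟨ne_iff_val_ne.mpr (by omega), ne_iff_val_ne.mpr (by omega)⟩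
      calc 3 = ({a, w₂, b} : Finset (ZMod n)).card := hcard.symm
        _ ≤ S₂.card := Finset.card_le_card hsub
    have hS₁lt : S₁.card < S.card := by
      apply Finset.card_lt_card
      constructor
      · exact Finset.filter_subset _ _
      · intro hsub
        have := hsub hw₂S
        simp only [hS₁, Finset.mem_filter] at this
        omega
    have hS₂lt : S₂.card < S.card := by
      apply Finset.card_lt_card
      constructor
      · exact Finset.filter_subset _ _
      · intro hsub
        have := hsub hw₁S
        simp only [hS₂, Finset.mem_filter] at this
        omega
    -- chords of F₁ are chords of S₁
    have hne_of_mem : ∀ e ∈ F.erase d, ¬(e.1 = a ∧ e.2 = b) := by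
      rintro e he ⟨h1, h2⟩
      have : e = d := by
        rw [ha_def] at h1; rw [hb_def] at h2
        exact Prod.ext h1 h2
      exact (Finset.ne_of_mem_erase he) this
    have hokF₁ : ∀ e ∈ F₁, ChordOK S₁ e := by
      intro e he
      simp only [hF₁, Finset.mem_filter] at he
      obtain ⟨heF, hea, heb⟩ := he
      obtain ⟨hu, hz, huz, ⟨w₀, hw₀S, hw₀⟩, -⟩ := hok e (Finset.mem_of_mem_erase heF)
      have hw₀' : e.1.val < w₀.val ∧ w₀.val < e.2.val := by rw [zbtw_iff] at hw₀; omega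
      refine ⟨?_, ?_, huz, ⟨w₀, ?_, hw₀⟩, ?_⟩
      · simp only [hS₁, Finset.mem_filter]; exact ⟨hu, by omega⟩
      · simp only [hS₁, Finset.mem_filter]; exact ⟨hz, by omega⟩
      · simp only [hS₁, Finset.mem_filter]; exact ⟨hw₀S, by omega⟩
      · -- outer witness within S₁ : a or b
        by_cases hcase : a.val < e.1.val
        · refine ⟨a, ?_, ?_⟩
          · simp only [hS₁, Finset.mem_filter]; exact ⟨ha, by omega⟩
          · rw [zbtw_iff]; omega
        · -- e.1 = a, hence e.2 < b
          have he1a : e.1.val = a.val := by omega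
          have he2b : e.2.val ≠ b.val := by
            intro hv
            exact hne_of_mem e heF ⟨val_inj' he1a, val_inj' hv⟩
          refine ⟨b, ?_, ?_⟩
          · simp only [hS₁, Finset.mem_filter]; exact ⟨hb, by omega⟩
          · rw [zbtw_iff]; omega
    have hokF₂ : ∀ e ∈ F₂, ChordOK S₂ e := by
      intro e he
      simp only [hF₂, Finset.mem_filter] at he
      obtain ⟨heF, hout⟩ := he
      obtain ⟨hu, hz, huz, ⟨w₀, hw₀S, hw₀⟩, ⟨w₃, hw₃S, hw₃⟩⟩ := hok e (Finset.mem_of_mem_erase heF)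
      have hw₀' : e.1.val < w₀.val ∧ w₀.val < e.2.val := by rw [zbtw_iff] at hw₀; omega
      have hw₃' : w₃.val < e.1.val ∨ e.2.val < w₃.val := by rw [zbtw_iff] at hw₃; omega
      have hncde := hnc d hd e (Finset.mem_of_mem_erase heF)
      have hnced := hnc e (Finset.mem_of_mem_erase heF) d hd
      rw [← ha_def, ← hb_def] at hncde hnced
      -- endpoints lie outside the open arc (a,b)
      have hu' : e.1.val ≤ a.val ∨ b.val ≤ e.1.val := by omega
      have hz' : e.2.val ≤ a.val ∨ b.val ≤ e.2.val := by omega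
      refine ⟨?_, ?_, huz, ?_, ?_⟩
      · simp only [hS₂, Finset.mem_filter]; exact ⟨hu, hu'⟩
      · simp only [hS₂, Finset.mem_filter]; exact ⟨hz, hz'⟩
      · -- inner witness within S₂
        rcases hz' with hza | hzb
        · -- both endpoints ≤ a
          exact ⟨w₀, by simp only [hS₂, Finset.mem_filter]; exact ⟨hw₀S, by omega⟩, hw₀⟩
        · rcases hu' with hua | hub
          · -- e.1 ≤ a ≤ b ≤ e.2
            by_cases hstrict : e.1.val < a.val
            · refine ⟨a, ?_, ?_⟩
              · simp only [hS₂, Finset.mem_filter]; exact ⟨ha, by omega⟩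
              · rw [zbtw_iff]; omega
            · -- e.1 = a, so e.2 ≠ b hence b < e.2
              have he1a : e.1.val = a.val := by omega
              have he2b : e.2.val ≠ b.val := by
                intro hv
                exact hne_of_mem e heF ⟨val_inj' he1a, val_inj' hv⟩
              refine ⟨b, ?_, ?_⟩
              · simp only [hS₂, Finset.mem_filter]; exact ⟨hb, by omega⟩
              · rw [zbtw_iff]; omega
          · -- both endpoints ≥ b
            exact ⟨w₀, by simp only [hS₂, Finset.mem_filter]; exact ⟨hw₀S, by omega⟩, hw₀⟩
      · -- outer witness within S₂
        rcases hz' with hza | hzb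
        · -- both ≤ a : use b
          refine ⟨b, ?_, ?_⟩
          · simp only [hS₂, Finset.mem_filter]; exact ⟨hb, by omega⟩
          · rw [zbtw_iff]; omega
        · rcases hu' with hua | hub
          · -- e.1 ≤ a, b ≤ e.2 : the original outer witness works
            refine ⟨w₃, ?_, hw₃⟩
            simp only [hS₂, Finset.mem_filter]; exact ⟨hw₃S, by omega⟩
          · -- both ≥ b : use a
            refine ⟨a, ?_, ?_⟩
            · simp only [hS₂, Finset.mem_filter]; exact ⟨ha, by omega⟩
            · rw [zbtw_iff]; omega
    have hncF₁ : NC F₁ := fun e he f hf =>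
      hnc e (Finset.mem_of_mem_erase (Finset.mem_of_mem_filter _ he))
        f (Finset.mem_of_mem_erase (Finset.mem_of_mem_filter _ hf))
    have hncF₂ : NC F₂ := fun e he f hf =>
      hnc e (Finset.mem_of_mem_erase (Finset.mem_of_mem_filter _ he))
        f (Finset.mem_of_mem_erase (Finset.mem_of_mem_filter _ hf))
    have hIH₁ := ih S₁ F₁ (by omega) hS₁3 hokF₁ hncF₁
    have hIH₂ := ih S₂ F₂ (by omega) hS₂3 hokF₂ hncF₂
    have hsplit : F₁.card + F₂.card = (F.erase d).card :=
      Finset.card_filter_add_card_filter_not _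
    have herase : (F.erase d).card = F.card - 1 := Finset.card_erase_of_mem hd
    have hFpos : 1 ≤ F.card := Finset.card_pos.mpr ⟨d, hd⟩
    omega
end

set_option linter.unusedSectionVars false
variable {α : Type*} [DecidableEq α]

/-- The type of matchings from `V` into `Tr`. -/
def Mt (V : Finset α) (Tr : Finset (Finset α)) :=
  {f : V → {s // s ∈ Tr} // Function.Injective f ∧ ∀ v, (v : α) ∈ (f v : Finset α)}

instance (V : Finset α) (Tr : Finset (Finset α)) : Finite (Mt V Tr) := by
  unfold Mt; infer_instance

noncomputable def M (V : Finset α) (Tr : Finset (Finset α)) : ℕ := Nat.card (Mt V Tr)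

lemma M_empty (Tr : Finset (Finset α)) : M (∅ : Finset α) Tr = 1 := by
  rw [M, Nat.card_eq_one_iff_unique]
  constructor
  · constructor
    intro f g
    apply Subtype.ext; funext v; exact absurd v.2 (Finset.notMem_empty _)
  · exact ⟨⟨fun v => absurd v.2 (Finset.notMem_empty _),
      fun a => absurd a.2 (Finset.notMem_empty _),
      fun v => absurd v.2 (Finset.notMem_empty _)⟩⟩

lemma M_zero_of_card (V : Finset α) (Tr : Finset (Finset α)) (h : Tr.card < V.card) :
    M V Tr = 0 := by
  rw [M]
  have : IsEmpty (Mt V Tr) := by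
    constructor
    rintro ⟨f, hinj, -⟩
    have := Fintype.card_le_of_injective f hinj
    simp only [Fintype.card_coe] at this
    omega
  exact Nat.card_of_isEmpty

/-- Removing a triangle containing no vertex of `V`. -/
lemma M_erase_tri (V : Finset α) (Tr : Finset (Finset α)) (t : Finset α)
    (h : ∀ w ∈ V, w ∉ t) : M V Tr = M V (Tr.erase t) := by
  rw [M, M]
  apply Nat.card_congr
  refine ⟨fun f => ⟨fun v => ⟨(f.1 v).1, Finset.mem_erase.mpr ⟨?_, (f.1 v).2⟩⟩, ?_, ?_⟩,
    fun g => ⟨fun v => ⟨(g.1 v).1, Finset.mem_of_mem_erase (g.1 v).2⟩, ?_, ?_⟩, ?_, ?_⟩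
  · intro he
    exact h v.1 v.2 (he ▸ f.2.2 v)
  · intro a b hab
    apply f.2.1
    apply Subtype.val_injective
    have hab' := congrArg Subtype.val hab
    exact hab'
  · intro v; exact f.2.2 v
  · intro a b hab
    apply g.2.1
    apply Subtype.val_injective
    have hab' := congrArg Subtype.val hab
    exact hab'
  · intro v; exact g.2.2 v
  · intro f; apply Subtype.ext; funext v; rfl
  · intro g; apply Subtype.ext; funext v; rfl

/-- If the only triangle containing `v` is `t`, matchings are the
matchings of `V.erase v` into `Tr.erase t`. -/
lemma M_forced (V : Finset α) (Tr : Finset (Finset α)) (v : α) (t : Finset α)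
    (hv : v ∈ V) (ht : t ∈ Tr) (hvt : v ∈ t) (huniq : ∀ s ∈ Tr, v ∈ s → s = t) :
    M V Tr = M (V.erase v) (Tr.erase t) := by
  rw [M, M]
  apply Nat.card_congr
  refine ⟨fun f => ⟨fun w => ⟨(f.1 ⟨w.1, Finset.mem_of_mem_erase w.2⟩).1,
      Finset.mem_erase.mpr ⟨?_, (f.1 _).2⟩⟩, ?_, ?_⟩,
    fun g => ⟨fun w => if h : w.1 = v then ⟨t, ht⟩ else
      ⟨(g.1 ⟨w.1, Finset.mem_erase.mpr ⟨h, w.2⟩⟩).1, Finset.mem_of_mem_erase (g.1 _).2⟩,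
      ?_, ?_⟩, ?_, ?_⟩
  · -- value of f off v is never t
    intro habs
    have hfv : (f.1 ⟨v, hv⟩ : Finset α) = t := huniq _ (f.1 ⟨v, hv⟩).2 (f.2.2 ⟨v, hv⟩)
    have : f.1 ⟨w.1, Finset.mem_of_mem_erase w.2⟩ = f.1 ⟨v, hv⟩ :=
      Subtype.val_injective (habs.trans hfv.symm)
    have := f.2.1 this
    have : w.1 = v := congrArg Subtype.val this
    exact (Finset.mem_erase.mp w.2).1 this
  · -- injectivity of restriction
    intro a b hab
    have hab' := congrArg Subtype.val hab
    have : f.1 ⟨a.1, Finset.mem_of_mem_erase a.2⟩ = f.1 ⟨b.1, Finset.mem_of_mem_erase b.2⟩ :=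
      Subtype.val_injective hab'
    have := congrArg Subtype.val (f.2.1 this)
    exact Subtype.val_injective this
  · intro w; exact f.2.2 _
  · -- injectivity of extension
    intro a b hab
    by_cases ha : a.1 = v <;> by_cases hb : b.1 = v
    · exact Subtype.val_injective (ha.trans hb.symm)
    · exfalso
      simp only [dif_pos ha, dif_neg hb] at hab
      have := congrArg Subtype.val hab
      exact (Finset.mem_erase.mp (g.1 ⟨b.1, Finset.mem_erase.mpr ⟨hb, b.2⟩⟩).2).1 this.symm
    · exfalso
      simp only [dif_neg ha, dif_pos hb] at hab
      have := congrArg Subtype.val hab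
      exact (Finset.mem_erase.mp (g.1 ⟨a.1, Finset.mem_erase.mpr ⟨ha, a.2⟩⟩).2).1 this
    · simp only [dif_neg ha, dif_neg hb] at hab
      have := congrArg Subtype.val hab
      have := g.2.1 (Subtype.val_injective this)
      have := congrArg Subtype.val this
      exact Subtype.val_injective this
  · -- membership of extension
    intro w
    by_cases h : w.1 = v
    · simp only [dif_pos h]; rw [h]; exact hvt
    · simp only [dif_neg h]; exact g.2.2 _
  · -- left inverse
    intro f
    apply Subtype.ext; funext w
    by_cases h : w.1 = v
    · simp only [dif_pos h]
      apply Subtype.val_injective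
      have hw : w = ⟨v, hv⟩ := Subtype.val_injective h
      have hfv : (f.1 ⟨v, hv⟩ : Finset α) = t := huniq _ (f.1 ⟨v, hv⟩).2 (f.2.2 ⟨v, hv⟩)
      rw [hw]; exact hfv.symm
    · simp only [dif_neg h]
  · -- right inverse
    intro g
    apply Subtype.ext; funext w
    have h : w.1 ≠ v := (Finset.mem_erase.mp w.2).1
    simp only [dif_neg h]

/-- If `w` is the only vertex of `V` lying in the triangle `t ∈ Tr`, then matchings
split according to whether `w` is matched to `t` or not. -/
lemma M_split (V : Finset α) (Tr : Finset (Finset α)) (w : α) (t : Finset α)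
    (hw : w ∈ V) (ht : t ∈ Tr) (hwt : w ∈ t) (honly : ∀ u ∈ V, u ∈ t → u = w) :
    M V Tr = M V (Tr.erase t) + M (V.erase w) (Tr.erase t) := by
  rw [M, M, M, ← Nat.card_sum]
  apply Nat.card_congr
  refine ⟨fun f => if h : (f.1 ⟨w, hw⟩ : Finset α) = t then
      Sum.inr ⟨fun u => ⟨(f.1 ⟨u.1, Finset.mem_of_mem_erase u.2⟩).1,
        Finset.mem_erase.mpr ⟨?_, (f.1 _).2⟩⟩, ?_, ?_⟩
    else
      Sum.inl ⟨fun u => ⟨(f.1 u).1, Finset.mem_erase.mpr ⟨?_, (f.1 u).2⟩⟩, ?_, ?_⟩,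
    fun z => Sum.elim
      (fun g => ⟨fun u => ⟨(g.1 u).1, Finset.mem_of_mem_erase (g.1 u).2⟩, ?_, ?_⟩)
      (fun g => ⟨fun u => if h : u.1 = w then ⟨t, ht⟩ else
        ⟨(g.1 ⟨u.1, Finset.mem_erase.mpr ⟨h, u.2⟩⟩).1, Finset.mem_of_mem_erase (g.1 _).2⟩,
        ?_, ?_⟩) z, ?_, ?_⟩
  · -- w matched to t: other values differ from t
    intro habs
    have : f.1 ⟨u.1, Finset.mem_of_mem_erase u.2⟩ = f.1 ⟨w, hw⟩ :=
      Subtype.val_injective (habs.trans h.symm)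
    have := congrArg Subtype.val (f.2.1 this)
    exact (Finset.mem_erase.mp u.2).1 this
  · intro a b hab
    have hab' := congrArg Subtype.val hab
    have := congrArg Subtype.val (f.2.1 (Subtype.val_injective hab'))
    exact Subtype.val_injective this
  · intro u; exact f.2.2 _
  · -- w not matched to t: no value is t
    intro habs
    have : u.1 ∈ t := habs ▸ f.2.2 u
    have hu : u.1 = w := honly _ u.2 this
    have hue : u = (⟨w, hw⟩ : {x // x ∈ V}) := Subtype.val_injective hu
    exact h (hue ▸ habs)
  · intro a b hab
    have hab' := congrArg Subtype.val hab
    exact f.2.1 (Subtype.val_injective hab')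
  · intro u; exact f.2.2 u
  · -- inl inverse: injective
    intro a b hab
    have hab' := congrArg Subtype.val hab
    have := congrArg Subtype.val (g.2.1 (Subtype.val_injective hab'))
    exact Subtype.val_injective this
  · intro u; exact g.2.2 u
  · -- inr inverse: injective
    intro a b hab
    by_cases ha : a.1 = w <;> by_cases hb : b.1 = w
    · exact Subtype.val_injective (ha.trans hb.symm)
    · exfalso
      simp only [dif_pos ha, dif_neg hb] at hab
      have := congrArg Subtype.val hab
      exact (Finset.mem_erase.mp (g.1 ⟨b.1, Finset.mem_erase.mpr ⟨hb, b.2⟩⟩).2).1 this.symm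
    · exfalso
      simp only [dif_neg ha, dif_pos hb] at hab
      have := congrArg Subtype.val hab
      exact (Finset.mem_erase.mp (g.1 ⟨a.1, Finset.mem_erase.mpr ⟨ha, a.2⟩⟩).2).1 this
    · simp only [dif_neg ha, dif_neg hb] at hab
      have := congrArg Subtype.val hab
      have := congrArg Subtype.val (g.2.1 (Subtype.val_injective this))
      exact Subtype.val_injective this
  · intro u
    by_cases h : u.1 = w
    · simp only [dif_pos h]; rw [h]; exact hwt
    · simp only [dif_neg h]; exact g.2.2 _
  · -- left inverse
    intro f
    by_cases h : (f.1 ⟨w, hw⟩ : Finset α) = t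
    · simp only [dif_pos h, Sum.elim_inr]
      apply Subtype.ext; funext u
      by_cases hu : u.1 = w
      · dsimp only [Sum.elim]; simp only [dif_pos hu]
        apply Subtype.val_injective
        have : u = ⟨w, hw⟩ := Subtype.val_injective hu
        rw [this]; exact h.symm
      · dsimp only [Sum.elim]; simp only [dif_neg hu]
    · simp only [dif_neg h, Sum.elim_inl]
      apply Subtype.ext; funext u
      rfl
  · -- right inverse
    rintro (g | g)
    · simp only [Sum.elim_inl]
      rw [dif_neg]
      · apply congrArg; apply Subtype.ext; funext u; rfl
      · intro habs
        exact (Finset.mem_erase.mp (g.1 ⟨w, hw⟩).2).1 habs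
    · simp only [Sum.elim_inr]
      rw [dif_pos]
      · apply congrArg; apply Subtype.ext; funext u
        have hu : u.1 ≠ w := (Finset.mem_erase.mp u.2).1
        dsimp only [Sum.elim]; simp only [dif_neg hu]
      · dsimp only [Sum.elim]; rw [dif_pos rfl]
section
variable {n : ℕ} [NeZero n]

noncomputable def arcS (S : Finset (ZMod n)) (i j : ZMod n) : Finset (ZMod n) :=
  S.filter (fun w => zbtw i w j)

/-- The axioms for a triangulation of the sub-polygon on vertex set `S`. -/
structure Tri (S : Finset (ZMod n)) (D : Finset (ZMod n × ZMod n)) : Prop where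
  mem1 : ∀ d ∈ D, d.1 ∈ S
  mem2 : ∀ d ∈ D, d.2 ∈ S
  lt : ∀ d ∈ D, d.1.val < d.2.val
  arc1 : ∀ d ∈ D, ∃ w ∈ S, zbtw d.1 w d.2
  arc2 : ∀ d ∈ D, ∃ w ∈ S, zbtw d.2 w d.1
  nc : NC D
  cardD : D.card = S.card - 3

/-- `v` is an ear vertex with neighbours `p`, `q` and ear diagonal `{p, q}`. -/
def Ear (S : Finset (ZMod n)) (D : Finset (ZMod n × ZMod n)) (v p q : ZMod n) : Prop :=
  v ∈ S ∧ p ∈ S ∧ q ∈ S ∧ v ≠ p ∧ v ≠ q ∧ p ≠ q ∧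
    ((p, q) ∈ D ∨ (q, p) ∈ D) ∧
    (∀ w ∈ S, ¬ zbtw p w v) ∧ (∀ w ∈ S, ¬ zbtw v w q) ∧
    (∀ d ∈ D, d.1 ≠ v ∧ d.2 ≠ v)

lemma cross_contra {D : Finset (ZMod n × ZMod n)} (hnc : NC D)
    (hlt : ∀ d ∈ D, d.1.val < d.2.val) {d e : ZMod n × ZMod n} (hd : d ∈ D) (he : e ∈ D)
    {x y : ZMod n} (hxy : (x = e.1 ∧ y = e.2) ∨ (x = e.2 ∧ y = e.1))
    (hx : zbtw d.1 x d.2) (hy : zbtw d.2 y d.1) : False := by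
  have h1 := hlt d hd
  have h2 := hlt e he
  have h3 := hnc d hd e he
  have h4 := hnc e he d hd
  rw [zbtw_iff] at hx hy
  rcases hxy with ⟨rfl, rfl⟩ | ⟨rfl, rfl⟩ <;> omega

lemma escape {a b e1 e2 w : ZMod n} (h1 : zbtw e1 w e2) (h2 : zbtw a w b)
    (h3 : ¬ zbtw a e1 b) (h4 : ¬ zbtw a e2 b) (h5 : ¬(e1 = a ∧ e2 = b))
    (h6 : ¬(e1 = b ∧ e2 = a)) (h7 : e1 ≠ e2) :
    (a ≠ e1 ∧ a ≠ e2 ∧ zbtw e1 a e2) ∨ (b ≠ e1 ∧ b ≠ e2 ∧ zbtw e1 b e2) := by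
  have h5' : ¬(e1.val = a.val ∧ e2.val = b.val) := fun ⟨x, y⟩ => h5 ⟨val_inj' x, val_inj' y⟩
  have h6' : ¬(e1.val = b.val ∧ e2.val = a.val) := fun ⟨x, y⟩ => h6 ⟨val_inj' x, val_inj' y⟩
  clear h5 h6
  simp only [zbtw_iff, ne_iff_val_ne] at *
  omega
end
section
variable {n : ℕ} [NeZero n]

lemma btw_tri {x y z : ZMod n} (h1 : x ≠ y) (h2 : y ≠ z) (h3 : x ≠ z) :
    zbtw x y z ∨ zbtw x z y := by
  rw [ne_iff_val_ne] at h1 h2 h3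
  rw [zbtw_iff, zbtw_iff]
  omega

lemma btw_ne13 {x y z : ZMod n} (h : zbtw x y z) : x ≠ z := by
  rw [zbtw_iff] at h; rw [ne_iff_val_ne]; omega

lemma btw_rot {x y z : ZMod n} (h : zbtw x y z) : zbtw y z x := by
  rw [zbtw_iff] at *; omega

lemma mem_arcS {S : Finset (ZMod n)} {i j w : ZMod n} :
    w ∈ arcS S i j ↔ w ∈ S ∧ zbtw i w j := Finset.mem_filter

/-- No endpoint of a diagonal lies strictly inside a minimal arc. -/
lemma no_endpoint_inside (S : Finset (ZMod n)) (D : Finset (ZMod n × ZMod n)) (hT : Tri S D)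
    (a b : ZMod n) (dd : ZMod n × ZMod n) (hdd : dd ∈ D)
    (hchord : (dd.1 = a ∧ dd.2 = b) ∨ (dd.1 = b ∧ dd.2 = a)) (m : ℕ)
    (hm : (arcS S a b).card = m) (hm1 : 1 ≤ m)
    (hminP : ∀ e ∈ D, m ≤ (arcS S e.1 e.2).card ∧ m ≤ (arcS S e.2 e.1).card) :
    ∀ e ∈ D, ∀ u z : ZMod n, ((u = e.1 ∧ z = e.2) ∨ (u = e.2 ∧ z = e.1)) → ¬ zbtw a u b := by
  intro e he u z huz hu
  have hez : e.1 ≠ e.2 := ne_iff_val_ne.mpr (Nat.ne_of_lt (hT.lt _ he))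
  have hzu : z ≠ u := by rcases huz with ⟨rfl, rfl⟩ | ⟨rfl, rfl⟩; exacts [hez.symm, hez]
  have harcs : m ≤ (arcS S u z).card ∧ m ≤ (arcS S z u).card := by
    rcases huz with ⟨rfl, rfl⟩ | ⟨rfl, rfl⟩
    · exact hminP e he
    · exact (hminP e he).symm
  have huS : u ∈ S := by
    rcases huz with ⟨rfl, -⟩ | ⟨rfl, -⟩; exacts [hT.mem1 _ he, hT.mem2 _ he]
  have hzS : z ∈ S := by
    rcases huz with ⟨-, rfl⟩ | ⟨-, rfl⟩; exacts [hT.mem2 _ he, hT.mem1 _ he]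
  have huA : u ∈ arcS S a b := mem_arcS.mpr ⟨huS, hu⟩
  have hua : u ≠ a := hu.1
  have hub : u ≠ b := hu.2.1
  by_cases hzin : zbtw a z b
  · -- both endpoints strictly inside the minimal arc
    have hzA : z ∈ arcS S a b := mem_arcS.mpr ⟨hzS, hzin⟩
    have hcard2 : (((arcS S a b).erase u).erase z).card = m - 2 := by
      rw [Finset.card_erase_of_mem (Finset.mem_erase.mpr ⟨hzu, hzA⟩),
        Finset.card_erase_of_mem huA, hm]
      omega
    rcases btw_tri hua.symm (hzu.symm : u ≠ z) (Ne.symm hzin.1) with h | h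
    · -- order a, u, z : arc u→z inside
      have hsub : arcS S u z ⊆ ((arcS S a b).erase u).erase z := by
        intro w hw
        rw [mem_arcS] at hw
        rw [Finset.mem_erase, Finset.mem_erase, mem_arcS]
        refine ⟨hw.2.2.1, hw.2.1, hw.1, ?_⟩
        have h1 := hw.2; have h2 := hu; have h3 := hzin
        rw [zbtw_iff] at h h1 h2 h3 ⊢
        omega
      have := Finset.card_le_card hsub
      omega
    · -- order a, z, u : arc z→u inside
      have hsub : arcS S z u ⊆ ((arcS S a b).erase u).erase z := by
        intro w hw
        rw [mem_arcS] at hw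
        rw [Finset.mem_erase, Finset.mem_erase, mem_arcS]
        refine ⟨hw.2.1, hw.2.2.1, hw.1, ?_⟩
        have h1 := hw.2; have h2 := hu; have h3 := hzin
        rw [zbtw_iff] at h h1 h2 h3 ⊢
        omega
      have := Finset.card_le_card hsub
      omega
  · rcases eq_or_ne z a with hza | hza
    · -- z = a : the arc z→u is inside
      have hzaval : z.val = a.val := by rw [hza]
      have hsub : arcS S z u ⊆ (arcS S a b).erase u := by
        intro w hw
        rw [mem_arcS] at hw
        rw [Finset.mem_erase, mem_arcS]
        refine ⟨hw.2.2.1, hw.1, ?_⟩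
        have h1 := hw.2; have h2 := hu
        rw [zbtw_iff] at h1 h2 ⊢
        omega
      have := Finset.card_le_card hsub
      rw [Finset.card_erase_of_mem huA, hm] at this
      omega
    · rcases eq_or_ne z b with hzb | hzb
      · -- z = b : the arc u→z is inside
        have hzbval : z.val = b.val := by rw [hzb]
        have hsub : arcS S u z ⊆ (arcS S a b).erase u := by
          intro w hw
          rw [mem_arcS] at hw
          rw [Finset.mem_erase, mem_arcS]
          refine ⟨hw.2.1, hw.1, ?_⟩
          have h1 := hw.2; have h2 := hu
          rw [zbtw_iff] at h1 h2 ⊢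
          omega
        have := Finset.card_le_card hsub
        rw [Finset.card_erase_of_mem huA, hm] at this
        omega
      · -- z on the far side : crossing
        have hzfar : zbtw b z a := by
          rcases btw_tri (Ne.symm hza) hzb (btw_ne13 hu) with h | h
          · exact absurd h hzin
          · exact btw_rot h
        rcases hchord with ⟨h1, h2⟩ | ⟨h1, h2⟩
        · refine cross_contra hT.nc hT.lt hdd he (x := u) (y := z) huz ?_ ?_
          · rw [h1, h2]; exact hu
          · rw [h1, h2]; exact hzfar
        · refine cross_contra hT.nc hT.lt hdd he (x := z) (y := u) ?_ ?_ ?_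
          · rcases huz with ⟨hh1, hh2⟩ | ⟨hh1, hh2⟩
            · exact Or.inr ⟨hh2, hh1⟩
            · exact Or.inl ⟨hh2, hh1⟩
          · rw [h1, h2]; exact hzfar
          · rw [h1, h2]; exact hu
end
section
variable {n : ℕ} [NeZero n]

lemma ear_aux (S : Finset (ZMod n)) (D : Finset (ZMod n × ZMod n)) (hT : Tri S D)
    (h4 : 4 ≤ S.card) (a b : ZMod n) (hd₀ : (a, b) ∈ D ∨ (b, a) ∈ D) (m : ℕ)
    (hm : (arcS S a b).card = m) (hother : m ≤ (arcS S b a).card)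
    (hminP : ∀ e ∈ D, m ≤ (arcS S e.1 e.2).card ∧ m ≤ (arcS S e.2 e.1).card) :
    ∃ v p q, Ear S D v p q := by
  have ha : a ∈ S := by rcases hd₀ with h | h; exacts [hT.mem1 _ h, hT.mem2 _ h]
  have hb : b ∈ S := by rcases hd₀ with h | h; exacts [hT.mem2 _ h, hT.mem1 _ h]
  have hab : a ≠ b := by
    rcases hd₀ with h | h
    · exact ne_iff_val_ne.mpr (Nat.ne_of_lt (hT.lt _ h))
    · exact (ne_iff_val_ne.mpr (Nat.ne_of_lt (hT.lt _ h))).symm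
  have hm1 : 1 ≤ m := by
    rw [← hm]
    apply Finset.card_pos.mpr
    rcases hd₀ with h | h
    · obtain ⟨w, hwS, hw⟩ := hT.arc1 _ h
      exact ⟨w, mem_arcS.mpr ⟨hwS, hw⟩⟩
    · obtain ⟨w, hwS, hw⟩ := hT.arc2 _ h
      exact ⟨w, mem_arcS.mpr ⟨hwS, hw⟩⟩
  obtain ⟨dd, hdd, hchord⟩ : ∃ dd ∈ D, (dd.1 = a ∧ dd.2 = b) ∨ (dd.1 = b ∧ dd.2 = a) := by
    rcases hd₀ with h | h
    · exact ⟨(a, b), h, Or.inl ⟨rfl, rfl⟩⟩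
    · exact ⟨(b, a), h, Or.inr ⟨rfl, rfl⟩⟩
  have hkey := no_endpoint_inside S D hT a b dd hdd hchord m hm hm1 hminP
  by_cases hm2 : m = 1
  · -- minimal arc has a single vertex : it is an ear
    subst hm2
    obtain ⟨v, hvA⟩ := Finset.card_eq_one.mp hm
    have hv : v ∈ S ∧ zbtw a v b := by
      have : v ∈ arcS S a b := hvA ▸ Finset.mem_singleton_self v
      exact mem_arcS.mp this
    refine ⟨v, a, b, hv.1, ha, hb, hv.2.1, hv.2.2.1, hab, hd₀, ?_, ?_, ?_⟩
    · -- nothing strictly between a and v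
      intro w hwS hw
      have hwb : zbtw a w b ∧ w ≠ v := by
        have h1 := hv.2
        rw [zbtw_iff] at hw h1 ⊢
        rw [ne_iff_val_ne]
        constructor <;> omega
      have : w ∈ arcS S a b := mem_arcS.mpr ⟨hwS, hwb.1⟩
      rw [hvA, Finset.mem_singleton] at this
      exact hwb.2 this
    · -- nothing strictly between v and b
      intro w hwS hw
      have hwb : zbtw a w b ∧ w ≠ v := by
        have h1 := hv.2
        rw [zbtw_iff] at hw h1 ⊢
        rw [ne_iff_val_ne]
        constructor <;> omega
      have : w ∈ arcS S a b := mem_arcS.mpr ⟨hwS, hwb.1⟩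
      rw [hvA, Finset.mem_singleton] at this
      exact hwb.2 this
    · -- no diagonal is incident with v
      intro e he
      constructor <;> intro hev
      · exact hkey e he e.1 e.2 (Or.inl ⟨rfl, rfl⟩) (hev ▸ hv.2)
      · exact hkey e he e.2 e.1 (Or.inr ⟨rfl, rfl⟩) (hev ▸ hv.2)
  · -- m ≥ 2 : contradiction with the maximal number of chords
    exfalso
    set A := arcS S a b with hA
    set S₂ := S \ A with hS₂
    set F := D.erase dd with hF
    have hAS : A ⊆ S := Finset.filter_subset _ _
    have hS₂card : S₂.card = S.card - m := by
      rw [hS₂, Finset.card_sdiff_of_subset hAS, hm]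
    have haS₂ : a ∈ S₂ := by
      rw [hS₂, Finset.mem_sdiff]
      refine ⟨ha, ?_⟩
      rw [hA, mem_arcS]
      rintro ⟨-, h⟩
      exact h.1 rfl
    have hbS₂ : b ∈ S₂ := by
      rw [hS₂, Finset.mem_sdiff]
      refine ⟨hb, ?_⟩
      rw [hA, mem_arcS]
      rintro ⟨-, h⟩
      exact h.2.1 rfl
    have hS₂3 : 3 ≤ S₂.card := by
      have hsub : insert a (insert b (arcS S b a)) ⊆ S₂ := by
        intro w hw
        simp only [Finset.mem_insert] at hw
        rcases hw with rfl | rfl | hw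
        · exact haS₂
        · exact hbS₂
        · rw [mem_arcS] at hw
          rw [hS₂, Finset.mem_sdiff]
          refine ⟨hw.1, ?_⟩
          rw [hA, mem_arcS]
          rintro ⟨-, h⟩
          have h2 := hw.2
          rw [zbtw_iff] at h h2
          omega
      have hcard : (insert a (insert b (arcS S b a))).card = (arcS S b a).card + 2 := by
        rw [Finset.card_insert_of_notMem, Finset.card_insert_of_notMem]
        · rw [mem_arcS]; rintro ⟨-, h⟩; exact h.1 rfl
        · simp only [Finset.mem_insert, mem_arcS]
          rintro (rfl | ⟨-, h⟩)
          · exact hab rfl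
          · exact h.2.1 rfl
      have := Finset.card_le_card hsub
      omega
    have hokF : ∀ e ∈ F, ChordOK S₂ e := by
      intro e he'
      have he : e ∈ D := Finset.mem_of_mem_erase he'
      have hne : e ≠ dd := Finset.ne_of_mem_erase he'
      have h1m : ¬ zbtw a e.1 b := hkey e he e.1 e.2 (Or.inl ⟨rfl, rfl⟩)
      have h2m : ¬ zbtw a e.2 b := hkey e he e.2 e.1 (Or.inr ⟨rfl, rfl⟩)
      have h1S₂ : e.1 ∈ S₂ := by
        rw [hS₂, Finset.mem_sdiff]
        exact ⟨hT.mem1 _ he, fun hmem => h1m (mem_arcS.mp hmem).2⟩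
      have h2S₂ : e.2 ∈ S₂ := by
        rw [hS₂, Finset.mem_sdiff]
        exact ⟨hT.mem2 _ he, fun hmem => h2m (mem_arcS.mp hmem).2⟩
      have h5 : ¬(e.1 = a ∧ e.2 = b) := by
        rintro ⟨ha1, hb1⟩
        rcases hchord with ⟨hc1, hc2⟩ | ⟨hc1, hc2⟩
        · exact hne (Prod.ext (ha1.trans hc1.symm) (hb1.trans hc2.symm))
        · have h7 := hT.lt _ he
          rw [ha1, hb1] at h7
          have h8 := hT.lt _ hdd
          rw [hc1, hc2] at h8
          omega
      have h6 : ¬(e.1 = b ∧ e.2 = a) := by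
        rintro ⟨ha1, hb1⟩
        rcases hchord with ⟨hc1, hc2⟩ | ⟨hc1, hc2⟩
        · have h7 := hT.lt _ he
          have h8 := hT.lt _ hdd
          rw [ha1, hb1] at h7
          rw [hc1, hc2] at h8
          omega
        · exact hne (Prod.ext (ha1.trans hc1.symm) (hb1.trans hc2.symm))
      have h7 : e.1 ≠ e.2 := ne_iff_val_ne.mpr (Nat.ne_of_lt (hT.lt _ he))
      refine ⟨h1S₂, h2S₂, hT.lt _ he, ?_, ?_⟩
      · -- inner witness
        obtain ⟨w, hwS, hw⟩ := hT.arc1 _ he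
        by_cases hwA : zbtw a w b
        · rcases escape hw hwA h1m h2m h5 h6 h7 with ⟨hx1, hx2, hx3⟩ | ⟨hx1, hx2, hx3⟩
          · exact ⟨a, haS₂, hx3⟩
          · exact ⟨b, hbS₂, hx3⟩
        · refine ⟨w, ?_, hw⟩
          rw [hS₂, Finset.mem_sdiff]
          exact ⟨hwS, fun hmem => hwA (mem_arcS.mp hmem).2⟩
      · -- outer witness
        obtain ⟨w, hwS, hw⟩ := hT.arc2 _ he
        by_cases hwA : zbtw a w b
        · rcases escape hw hwA h2m h1m (fun ⟨x, y⟩ => h6 ⟨y, x⟩) (fun ⟨x, y⟩ => h5 ⟨y, x⟩)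
            h7.symm with ⟨hx1, hx2, hx3⟩ | ⟨hx1, hx2, hx3⟩
          · exact ⟨a, haS₂, hx3⟩
          · exact ⟨b, hbS₂, hx3⟩
        · refine ⟨w, ?_, hw⟩
          rw [hS₂, Finset.mem_sdiff]
          exact ⟨hwS, fun hmem => hwA (mem_arcS.mp hmem).2⟩
    have hncF : NC F := fun e he f hf =>
      hT.nc e (Finset.mem_of_mem_erase he) f (Finset.mem_of_mem_erase hf)
    have := max_chords S₂.card S₂ F (le_refl _) hS₂3 hokF hncF
    have hFcard : F.card = D.card - 1 := Finset.card_erase_of_mem hdd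
    have hDcard := hT.cardD
    omega

lemma exists_ear (S : Finset (ZMod n)) (D : Finset (ZMod n × ZMod n)) (hT : Tri S D)
    (h4 : 4 ≤ S.card) : ∃ v p q, Ear S D v p q := by
  have hD : D.Nonempty := by
    apply Finset.card_pos.mp
    rw [hT.cardD]
    omega
  obtain ⟨d₀, hd₀, hmin⟩ := Finset.exists_min_image D
    (fun d => min (arcS S d.1 d.2).card (arcS S d.2 d.1).card) hD
  rcases le_total (arcS S d₀.1 d₀.2).card (arcS S d₀.2 d₀.1).card with hle | hle
  · refine ear_aux S D hT h4 d₀.1 d₀.2 (Or.inl hd₀) _ rfl hle ?_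
    intro e he
    have := hmin e he
    simp only [min_le_iff, le_min_iff] at this ⊢
    omega
  · refine ear_aux S D hT h4 d₀.2 d₀.1 (Or.inr hd₀) _ rfl hle ?_
    intro e he
    have := hmin e he
    simp only [min_le_iff, le_min_iff] at this ⊢
    omega
end
section
variable {n : ℕ} [NeZero n]

def adjS (S : Finset (ZMod n)) (a b : ZMod n) : Prop :=
  a ∈ S ∧ b ∈ S ∧ a ≠ b ∧ ∀ w ∈ S, ¬ zbtw a w b

def edgeS (S : Finset (ZMod n)) (D : Finset (ZMod n × ZMod n)) (a b : ZMod n) : Prop :=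
  (a, b) ∈ D ∨ (b, a) ∈ D ∨ adjS S a b ∨ adjS S b a

noncomputable def trisS (S : Finset (ZMod n)) (D : Finset (ZMod n × ZMod n)) :
    Finset (Finset (ZMod n)) :=
  Finset.univ.filter (fun s => s.card = 3 ∧ ∀ i ∈ s, ∀ j ∈ s, i ≠ j → edgeS S D i j)

lemma mem_trisS {S : Finset (ZMod n)} {D : Finset (ZMod n × ZMod n)} {s : Finset (ZMod n)} :
    s ∈ trisS S D ↔ s.card = 3 ∧ ∀ i ∈ s, ∀ j ∈ s, i ≠ j → edgeS S D i j := by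
  rw [trisS, Finset.mem_filter]
  simp only [Finset.mem_univ, true_and]

lemma edgeS_symm {S : Finset (ZMod n)} {D : Finset (ZMod n × ZMod n)} {a b : ZMod n}
    (h : edgeS S D a b) : edgeS S D b a := by
  rcases h with h | h | h | h
  exacts [Or.inr (Or.inl h), Or.inl h, Or.inr (Or.inr (Or.inr h)), Or.inr (Or.inr (Or.inl h))]

lemma edgeS_mem1 {S : Finset (ZMod n)} {D : Finset (ZMod n × ZMod n)} {a b : ZMod n}
    (hT : Tri S D) (h : edgeS S D a b) : a ∈ S := by
  rcases h with h | h | h | h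
  exacts [hT.mem1 _ h, hT.mem2 _ h, h.1, h.2.1]

/-- the successor adjacency splits an arc. -/
lemma arc_insert_succ {S : Finset (ZMod n)} {a b l : ZMod n}
    (hadj : ∀ w ∈ S, ¬ zbtw a w b) (haS : a ∈ S) (hbS : b ∈ S) (hab : a ≠ b)
    (hlS : l ∈ S) (hla : l ≠ a) (hlb : l ≠ b) :
    arcS S a l = insert b (arcS S b l) := by
  have hbal : zbtw a b l := by
    rcases btw_tri hab hlb.symm (Ne.symm hla) with h | h
    · exact h
    · exact absurd h (hadj l hlS)
  ext w
  simp only [mem_arcS, Finset.mem_insert]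
  constructor
  · rintro ⟨hwS, hw⟩
    rcases eq_or_ne w b with rfl | hwb
    · exact Or.inl rfl
    · refine Or.inr ⟨hwS, ?_⟩
      have hnot := hadj w hwS
      rw [ne_iff_val_ne] at hwb
      rw [zbtw_iff] at hw hbal hnot ⊢
      omega
  · rintro (rfl | ⟨hwS, hw⟩)
    · exact ⟨hbS, hbal⟩
    · refine ⟨hwS, ?_⟩
      rw [zbtw_iff] at hw hbal ⊢
      omega

/-- the predecessor adjacency splits an arc. -/
lemma arc_insert_pred {S : Finset (ZMod n)} {a b k : ZMod n}
    (hadj : ∀ w ∈ S, ¬ zbtw a w b) (haS : a ∈ S) (hbS : b ∈ S) (hab : a ≠ b)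
    (hkS : k ∈ S) (hka : k ≠ a) (hkb : k ≠ b) :
    arcS S k b = insert a (arcS S k a) := by
  have hkab : zbtw k a b := by
    rcases btw_tri hka hab hkb with h | h
    · exact h
    · exact absurd (btw_rot (btw_rot h)) (hadj k hkS)
  ext w
  simp only [mem_arcS, Finset.mem_insert]
  constructor
  · rintro ⟨hwS, hw⟩
    rcases eq_or_ne w a with rfl | hwa
    · exact Or.inl rfl
    · refine Or.inr ⟨hwS, ?_⟩
      have hnot := hadj w hwS
      rw [ne_iff_val_ne] at hwa
      rw [zbtw_iff] at hw hkab hnot ⊢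
      omega
  · rintro (rfl | ⟨hwS, hw⟩)
    · exact ⟨haS, hkab⟩
    · refine ⟨hwS, ?_⟩
      rw [zbtw_iff] at hw hkab ⊢
      omega

/-- the complementary arc of an adjacent pair is everything else. -/
lemma arc_long {S : Finset (ZMod n)} {a b : ZMod n}
    (hadj : ∀ w ∈ S, ¬ zbtw a w b) (haS : a ∈ S) (hbS : b ∈ S) (hab : a ≠ b) :
    arcS S b a = (S.erase a).erase b := by
  ext w
  simp only [mem_arcS, Finset.mem_erase]
  constructor
  · rintro ⟨hwS, hw⟩
    exact ⟨hw.1, hw.2.1, hwS⟩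
  · rintro ⟨hwb, hwa, hwS⟩
    refine ⟨hwS, ?_⟩
    rcases btw_tri (Ne.symm hwb) hwa hab.symm with h | h
    · exact h
    · exact absurd (btw_rot h) (hadj w hwS)

lemma arcS_erase {S : Finset (ZMod n)} (v k l : ZMod n) :
    arcS (S.erase v) k l = (arcS S k l).erase v := by
  ext w
  simp only [mem_arcS, Finset.mem_erase]
  tauto

lemma arcS_self {S : Finset (ZMod n)} {i l : ZMod n} : i ∉ arcS S i l := by
  rw [mem_arcS]
  rintro ⟨-, h⟩
  exact h.1 rfl

lemma arcS_adj_empty {S : Finset (ZMod n)} {a b : ZMod n}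
    (hadj : ∀ w ∈ S, ¬ zbtw a w b) : arcS S a b = ∅ := by
  rw [Finset.eq_empty_iff_forall_notMem]
  intro w hw
  rw [mem_arcS] at hw
  exact hadj w hw.1 hw.2

/-- triangulation of a triangle: the unique triangle is the whole vertex set. -/
lemma tris3 {S : Finset (ZMod n)} (hS : S.card = 3) : trisS S (∅ : Finset (ZMod n × ZMod n)) = {S} := by
  ext s
  rw [mem_trisS, Finset.mem_singleton]
  constructor
  · rintro ⟨hcard, hedge⟩
    have hsub : s ⊆ S := by
      intro i hi
      obtain ⟨j, hj, hji⟩ := Finset.exists_mem_ne (show 1 < s.card by omega) i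
      have := hedge i hi j hj (Ne.symm hji)
      rcases this with h | h | h | h
      · exact absurd h (Finset.notMem_empty _)
      · exact absurd h (Finset.notMem_empty _)
      · exact h.1
      · exact h.2.1
    apply Finset.eq_of_subset_of_card_le hsub
    omega
  · rintro rfl
    refine ⟨hS, ?_⟩
    intro i hi j hj hij
    by_cases h1 : ∀ w ∈ s, ¬ zbtw i w j
    · exact Or.inr (Or.inr (Or.inl ⟨hi, hj, hij, h1⟩))
    by_cases h2 : ∀ w ∈ s, ¬ zbtw j w i
    · exact Or.inr (Or.inr (Or.inr ⟨hj, hi, Ne.symm hij, h2⟩))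
    exfalso
    push_neg at h1 h2
    obtain ⟨w₁, hw₁S, hw₁⟩ := h1
    obtain ⟨w₂, hw₂S, hw₂⟩ := h2
    have hbig : ({i, j, w₁, w₂} : Finset (ZMod n)) ⊆ s := by
      intro w hw
      simp only [Finset.mem_insert, Finset.mem_singleton] at hw
      rcases hw with rfl | rfl | rfl | rfl <;> assumption
    have hcard4 : ({i, j, w₁, w₂} : Finset (ZMod n)).card = 4 := by
      have b1 := hw₁
      have b2 := hw₂
      rw [zbtw_iff] at b1 b2
      rw [Finset.card_insert_of_notMem, Finset.card_insert_of_notMem,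
        Finset.card_insert_of_notMem, Finset.card_singleton]
      · simp only [Finset.mem_singleton]
        intro hEq; have := congrArg ZMod.val hEq; omega
      · simp only [Finset.mem_insert, Finset.mem_singleton]
        rintro (hEq | hEq) <;> (have := congrArg ZMod.val hEq; omega)
      · simp only [Finset.mem_insert, Finset.mem_singleton]
        rintro (hEq | hEq | hEq) <;> (have := congrArg ZMod.val hEq; omega)
    have := Finset.card_le_card hbig
    omega
end
section
variable {n : ℕ} [NeZero n]

lemma ear_btw_pvq {S : Finset (ZMod n)} {D : Finset (ZMod n × ZMod n)} {v p q : ZMod n}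
    (hE : Ear S D v p q) : zbtw p v q := by
  obtain ⟨hvS, hpS, hqS, hvp, hvq, hpq, hpqD, hpv_adj, hvq_adj, hnd⟩ := hE
  rcases btw_tri hvp.symm hvq hpq with h | h
  · exact h
  · exact absurd h (hpv_adj q hqS)

lemma ear_btw_vqp {S : Finset (ZMod n)} {D : Finset (ZMod n × ZMod n)} {v p q : ZMod n}
    (hE : Ear S D v p q) : zbtw v q p := by
  obtain ⟨hvS, hpS, hqS, hvp, hvq, hpq, hpqD, hpv_adj, hvq_adj, hnd⟩ := hE
  rcases btw_tri hvq hpq.symm hvp with h | h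
  · exact h
  · exact absurd (btw_rot h) (hpv_adj q hqS)

lemma succ_unique {S : Finset (ZMod n)} {D : Finset (ZMod n × ZMod n)} {v p q : ZMod n}
    (hE : Ear S D v p q) : ∀ x ∈ S, x ≠ v → (∀ w ∈ S, ¬ zbtw v w x) → x = q := by
  obtain ⟨hvS, hpS, hqS, hvp, hvq, hpq, hpqD, hpv_adj, hvq_adj, hnd⟩ := hE
  intro x hxS hxv hadj
  by_contra hxq
  rcases btw_tri hxv.symm hxq hvq with h | h
  · exact hvq_adj x hxS h
  · exact hadj q hqS h

lemma pred_unique {S : Finset (ZMod n)} {D : Finset (ZMod n × ZMod n)} {v p q : ZMod n}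
    (hE : Ear S D v p q) : ∀ x ∈ S, x ≠ v → (∀ w ∈ S, ¬ zbtw x w v) → x = p := by
  obtain ⟨hvS, hpS, hqS, hvp, hvq, hpq, hpqD, hpv_adj, hvq_adj, hnd⟩ := hE
  intro x hxS hxv hadj
  by_contra hxp
  rcases btw_tri (fun h => hxp h.symm) hxv hvp.symm with h | h
  · exact hpv_adj x hxS h
  · exact hadj p hpS (btw_rot (btw_rot h))

lemma card_pvq {S : Finset (ZMod n)} {D : Finset (ZMod n × ZMod n)} {v p q : ZMod n}
    (hE : Ear S D v p q) : ({p, v, q} : Finset (ZMod n)).card = 3 := by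
  obtain ⟨hvS, hpS, hqS, hvp, hvq, hpq, hpqD, hpv_adj, hvq_adj, hnd⟩ := hE
  rw [Finset.card_insert_of_notMem, Finset.card_insert_of_notMem, Finset.card_singleton]
  · simpa using hvq
  · simp only [Finset.mem_insert, Finset.mem_singleton]
    push_neg
    exact ⟨fun h => hvp h.symm, hpq⟩

lemma ear_tri_unique {S : Finset (ZMod n)} {D : Finset (ZMod n × ZMod n)} {v p q : ZMod n}
    (hT : Tri S D) (hE : Ear S D v p q) :
    ∀ s ∈ trisS S D, v ∈ s → s = {p, v, q} := by
  have hpvq := card_pvq hE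
  obtain ⟨hvS, hpS, hqS, hvp, hvq, hpq, hpqD, hpv_adj, hvq_adj, hnd⟩ := hE
  intro s hs hvs
  rw [mem_trisS] at hs
  have hsub : s ⊆ {p, v, q} := by
    intro u hu
    simp only [Finset.mem_insert, Finset.mem_singleton]
    rcases eq_or_ne u v with rfl | huv
    · exact Or.inr (Or.inl rfl)
    rcases hs.2 v hvs u hu (Ne.symm huv) with h | h | h | h
    · exact absurd rfl (hnd _ h).1
    · exact absurd rfl (hnd _ h).2
    · exact Or.inr (Or.inr (succ_unique
        ⟨hvS, hpS, hqS, hvp, hvq, hpq, hpqD, hpv_adj, hvq_adj, hnd⟩ u h.2.1 huv h.2.2.2))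
    · exact Or.inl (pred_unique
        ⟨hvS, hpS, hqS, hvp, hvq, hpq, hpqD, hpv_adj, hvq_adj, hnd⟩ u h.1 huv h.2.2.2)
  exact Finset.eq_of_subset_of_card_le hsub (by omega)

lemma ear_tri_mem {S : Finset (ZMod n)} {D : Finset (ZMod n × ZMod n)} {v p q : ZMod n}
    (hE : Ear S D v p q) : ({p, v, q} : Finset (ZMod n)) ∈ trisS S D := by
  have hc := card_pvq hE
  obtain ⟨hvS, hpS, hqS, hvp, hvq, hpq, hpqD, hpv_adj, hvq_adj, hnd⟩ := hE
  rw [mem_trisS]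
  refine ⟨hc, ?_⟩
  have epv : edgeS S D p v := Or.inr (Or.inr (Or.inl ⟨hpS, hvS, fun h => hvp h.symm, hpv_adj⟩))
  have evq : edgeS S D v q := Or.inr (Or.inr (Or.inl ⟨hvS, hqS, hvq, hvq_adj⟩))
  have epq : edgeS S D p q := by
    rcases hpqD with h | h
    · exact Or.inl h
    · exact Or.inr (Or.inl h)
  intro i hi j hj hij
  simp only [Finset.mem_insert, Finset.mem_singleton] at hi hj
  rcases hi with rfl | rfl | rfl <;> rcases hj with rfl | rfl | rfl
  · exact absurd rfl hij
  · exact epv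
  · exact epq
  · exact edgeS_symm epv
  · exact absurd rfl hij
  · exact evq
  · exact edgeS_symm epq
  · exact edgeS_symm evq
  · exact absurd rfl hij

lemma adj_transfer1 {S : Finset (ZMod n)} {a b v : ZMod n} (h : adjS S a b)
    (hav : a ≠ v) (hbv : b ≠ v) : adjS (S.erase v) a b :=
  ⟨Finset.mem_erase.mpr ⟨hav, h.1⟩, Finset.mem_erase.mpr ⟨hbv, h.2.1⟩, h.2.2.1,
    fun w hw => h.2.2.2 w (Finset.mem_of_mem_erase hw)⟩

lemma adj_transfer2 {S : Finset (ZMod n)} {D : Finset (ZMod n × ZMod n)} {v p q : ZMod n}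
    (hE : Ear S D v p q) {a b : ZMod n} (h : adjS (S.erase v) a b) :
    adjS S a b ∨ (a = p ∧ b = q) := by
  obtain ⟨haS', hbS', hab, hadj'⟩ := h
  have haS : a ∈ S := Finset.mem_of_mem_erase haS'
  have hbS : b ∈ S := Finset.mem_of_mem_erase hbS'
  have hav : a ≠ v := (Finset.mem_erase.mp haS').1
  have hbv : b ≠ v := (Finset.mem_erase.mp hbS').1
  by_cases hv : zbtw a v b
  · right
    constructor
    · refine pred_unique hE a haS hav ?_
      intro w hwS hw
      rcases eq_or_ne w v with rfl | hwv
      · exact hw.2.1 rfl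
      · refine hadj' w (Finset.mem_erase.mpr ⟨hwv, hwS⟩) ?_
        rw [zbtw_iff] at hv hw ⊢
        rw [ne_iff_val_ne] at hwv
        omega
    · refine succ_unique hE b hbS hbv ?_
      intro w hwS hw
      rcases eq_or_ne w v with rfl | hwv
      · exact hw.1 rfl
      · refine hadj' w (Finset.mem_erase.mpr ⟨hwv, hwS⟩) ?_
        rw [zbtw_iff] at hv hw ⊢
        rw [ne_iff_val_ne] at hwv
        omega
  · left
    refine ⟨haS, hbS, hab, ?_⟩
    intro w hwS hw
    rcases eq_or_ne w v with rfl | hwv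
    · exact hv hw
    · exact hadj' w (Finset.mem_erase.mpr ⟨hwv, hwS⟩) hw

lemma ear_arc_witness {S : Finset (ZMod n)} {D : Finset (ZMod n × ZMod n)} {v p q : ZMod n}
    (hE : Ear S D v p q) {x y : ZMod n} (hxS : x ∈ S) (hyS : y ∈ S) (hv : zbtw x v y)
    (hne1 : ¬(x = p ∧ y = q)) (hne2 : ¬(x = q ∧ y = p)) :
    ∃ w, w ∈ S ∧ w ≠ v ∧ zbtw x w y := by
  have hE' := hE
  obtain ⟨hvS, hpS, hqS, hvp, hvq, hpq, hpqD, hpv_adj, hvq_adj, hnd⟩ := hE'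
  have hvx : v ≠ x := hv.1
  have hvy : v ≠ y := hv.2.1
  by_cases hq1 : q ≠ x ∧ q ≠ y
  · -- use q
    refine ⟨q, hqS, fun h => hvq h.symm, ?_⟩
    have h1 : zbtw v q y := by
      rcases btw_tri hvq hq1.2 hvy with h | h
      · exact h
      · exact absurd h (hvq_adj y hyS)
    have h2 := hq1.1
    rw [ne_iff_val_ne] at h2
    rw [zbtw_iff] at h1 hv ⊢
    omega
  · -- q is an endpoint; use p
    push_neg at hq1
    have hpxy : p ≠ x ∧ p ≠ y := by
      by_cases hqx : q = x
      · refine ⟨fun h => hpq (h.trans hqx.symm), fun h => hne2 ⟨hqx.symm, h.symm⟩⟩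
      · have hqy : q = y := hq1 hqx
        exact ⟨fun h => hne1 ⟨h.symm, hqy.symm⟩, fun h => hpq (h.trans hqy.symm)⟩
    refine ⟨p, hpS, fun h => hvp h.symm, ?_⟩
    rcases btw_tri (Ne.symm hpxy.1) (fun h => hvp h.symm) (Ne.symm hvx) with h | h
    · have h2 := hpxy.2
      rw [ne_iff_val_ne] at h2
      rw [zbtw_iff] at h hv ⊢
      omega
    · exact absurd (btw_rot (btw_rot h)) (hpv_adj x hxS)

end
section
variable {n : ℕ} [NeZero n]

lemma ear_tri' {S : Finset (ZMod n)} {D : Finset (ZMod n × ZMod n)} {v p q : ZMod n}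
    (hT : Tri S D) (hE : Ear S D v p q) (h4 : 4 ≤ S.card) {dd : ZMod n × ZMod n}
    (hdd : dd ∈ D) (hddc : dd = (p, q) ∨ dd = (q, p)) :
    Tri (S.erase v) (D.erase dd) := by
  have hE' := hE
  obtain ⟨hvS, hpS, hqS, hvp, hvq, hpq, hpqD, hpv_adj, hvq_adj, hnd⟩ := hE'
  constructor
  · intro e he
    have heD := Finset.mem_of_mem_erase he
    exact Finset.mem_erase.mpr ⟨(hnd _ heD).1, hT.mem1 _ heD⟩
  · intro e he
    have heD := Finset.mem_of_mem_erase he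
    exact Finset.mem_erase.mpr ⟨(hnd _ heD).2, hT.mem2 _ heD⟩
  · exact fun e he => hT.lt _ (Finset.mem_of_mem_erase he)
  · -- arc1
    intro e he
    have heD := Finset.mem_of_mem_erase he
    obtain ⟨w, hwS, hw⟩ := hT.arc1 _ heD
    rcases eq_or_ne w v with rfl | hwv
    · have hne1 : ¬(e.1 = p ∧ e.2 = q) := by
        rintro ⟨h1, h2⟩
        rcases hddc with rfl | rfl
        · exact Finset.ne_of_mem_erase he (Prod.ext h1 h2)
        · have := hT.lt _ heD
          have h3 := hT.lt _ hdd
          rw [h1, h2] at this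
          simp only at h3
          omega
      have hne2 : ¬(e.1 = q ∧ e.2 = p) := by
        rintro ⟨h1, h2⟩
        rcases hddc with rfl | rfl
        · have := hT.lt _ heD
          have h3 := hT.lt _ hdd
          rw [h1, h2] at this
          simp only at h3
          omega
        · exact Finset.ne_of_mem_erase he (Prod.ext h1 h2)
      obtain ⟨w', hw'S, hw'v, hw'⟩ :=
        ear_arc_witness hE (hT.mem1 _ heD) (hT.mem2 _ heD) hw hne1 hne2
      exact ⟨w', Finset.mem_erase.mpr ⟨hw'v, hw'S⟩, hw'⟩
    · exact ⟨w, Finset.mem_erase.mpr ⟨hwv, hwS⟩, hw⟩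
  · -- arc2
    intro e he
    have heD := Finset.mem_of_mem_erase he
    obtain ⟨w, hwS, hw⟩ := hT.arc2 _ heD
    rcases eq_or_ne w v with rfl | hwv
    · have hne1 : ¬(e.2 = p ∧ e.1 = q) := by
        rintro ⟨h1, h2⟩
        rcases hddc with rfl | rfl
        · have := hT.lt _ heD
          have h3 := hT.lt _ hdd
          rw [h1, h2] at this
          simp only at h3
          omega
        · exact Finset.ne_of_mem_erase he (Prod.ext h2 h1)
      have hne2 : ¬(e.2 = q ∧ e.1 = p) := by
        rintro ⟨h1, h2⟩
        rcases hddc with rfl | rfl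
        · exact Finset.ne_of_mem_erase he (Prod.ext h2 h1)
        · have := hT.lt _ heD
          have h3 := hT.lt _ hdd
          rw [h1, h2] at this
          simp only at h3
          omega
      obtain ⟨w', hw'S, hw'v, hw'⟩ :=
        ear_arc_witness hE (hT.mem2 _ heD) (hT.mem1 _ heD) hw hne1 hne2
      exact ⟨w', Finset.mem_erase.mpr ⟨hw'v, hw'S⟩, hw'⟩
    · exact ⟨w, Finset.mem_erase.mpr ⟨hwv, hwS⟩, hw⟩
  · exact fun e he f hf =>
      hT.nc e (Finset.mem_of_mem_erase he) f (Finset.mem_of_mem_erase hf)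
  · rw [Finset.card_erase_of_mem hdd, Finset.card_erase_of_mem hvS, hT.cardD]
    omega

lemma adjS'_pq {S : Finset (ZMod n)} {D : Finset (ZMod n × ZMod n)} {v p q : ZMod n}
    (hE : Ear S D v p q) : adjS (S.erase v) p q := by
  have hpvq := ear_btw_pvq hE
  obtain ⟨hvS, hpS, hqS, hvp, hvq, hpq, hpqD, hpv_adj, hvq_adj, hnd⟩ := hE
  refine ⟨Finset.mem_erase.mpr ⟨fun h => hvp h.symm, hpS⟩,
    Finset.mem_erase.mpr ⟨fun h => hvq h.symm, hqS⟩, hpq, ?_⟩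
  intro w hw hbtw
  have hwv : w ≠ v := (Finset.mem_erase.mp hw).1
  have hwS : w ∈ S := Finset.mem_of_mem_erase hw
  have : zbtw p w v ∨ zbtw v w q := by
    rw [ne_iff_val_ne] at hwv
    rw [zbtw_iff] at hbtw hpvq ⊢
    rw [zbtw_iff]
    omega
  rcases this with h | h
  · exact hpv_adj w hwS h
  · exact hvq_adj w hwS h

lemma ear_tris' {S : Finset (ZMod n)} {D : Finset (ZMod n × ZMod n)} {v p q : ZMod n}
    (hT : Tri S D) (hE : Ear S D v p q) (h4 : 4 ≤ S.card) {dd : ZMod n × ZMod n}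
    (hdd : dd ∈ D) (hddc : dd = (p, q) ∨ dd = (q, p)) :
    trisS (S.erase v) (D.erase dd) = (trisS S D).erase {p, v, q} := by
  have hT' := ear_tri' hT hE h4 hdd hddc
  have hadjpq := adjS'_pq hE
  have hE' := hE
  obtain ⟨hvS, hpS, hqS, hvp, hvq, hpq, hpqD, hpv_adj, hvq_adj, hnd⟩ := hE'
  ext s
  rw [Finset.mem_erase, mem_trisS, mem_trisS]
  constructor
  · rintro ⟨hcard, hedge⟩
    have hvs : v ∉ s := by
      intro hvs
      obtain ⟨j, hj, hji⟩ := Finset.exists_mem_ne (show 1 < s.card by omega) v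
      have := edgeS_mem1 hT' (hedge v hvs j hj (Ne.symm hji))
      exact (Finset.mem_erase.mp this).1 rfl
    refine ⟨?_, hcard, ?_⟩
    · intro hs
      rw [hs] at hvs
      simp at hvs
    · intro i hi j hj hij
      rcases hedge i hi j hj hij with h | h | h | h
      · exact Or.inl (Finset.mem_of_mem_erase h)
      · exact Or.inr (Or.inl (Finset.mem_of_mem_erase h))
      · rcases adj_transfer2 hE h with h' | ⟨rfl, rfl⟩
        · exact Or.inr (Or.inr (Or.inl h'))
        · rcases hpqD with h' | h'
          · exact Or.inl h'
          · exact Or.inr (Or.inl h')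
      · rcases adj_transfer2 hE h with h' | ⟨rfl, rfl⟩
        · exact Or.inr (Or.inr (Or.inr h'))
        · rcases hpqD with h' | h'
          · exact Or.inr (Or.inl h')
          · exact Or.inl h'
  · rintro ⟨hne, hcard, hedge⟩
    have hvs : v ∉ s := by
      intro hvs
      exact hne (ear_tri_unique hT hE s (mem_trisS.mpr ⟨hcard, hedge⟩) hvs)
    refine ⟨hcard, ?_⟩
    intro i hi j hj hij
    have hiv : i ≠ v := fun h => hvs (h ▸ hi)
    have hjv : j ≠ v := fun h => hvs (h ▸ hj)
    rcases hedge i hi j hj hij with h | h | h | h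
    · rcases eq_or_ne (i, j) dd with heq | hne'
      · have h1 : i = dd.1 := by rw [← heq]
        have h2 : j = dd.2 := by rw [← heq]
        rcases hddc with hc | hc
        · rw [hc] at h1 h2; subst h1; subst h2
          exact Or.inr (Or.inr (Or.inl hadjpq))
        · rw [hc] at h1 h2; subst h1; subst h2
          exact Or.inr (Or.inr (Or.inr hadjpq))
      · exact Or.inl (Finset.mem_erase.mpr ⟨hne', h⟩)
    · rcases eq_or_ne (j, i) dd with heq | hne'
      · have h1 : j = dd.1 := by rw [← heq]
        have h2 : i = dd.2 := by rw [← heq]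
        rcases hddc with hc | hc
        · rw [hc] at h1 h2; subst h1; subst h2
          exact Or.inr (Or.inr (Or.inr hadjpq))
        · rw [hc] at h1 h2; subst h1; subst h2
          exact Or.inr (Or.inr (Or.inl hadjpq))
      · exact Or.inr (Or.inl (Finset.mem_erase.mpr ⟨hne', h⟩))
    · exact Or.inr (Or.inr (Or.inl (adj_transfer1 h hiv hjv)))
    · exact Or.inr (Or.inr (Or.inr (adj_transfer1 h hjv hiv)))
end
section
variable {n : ℕ} [NeZero n]

lemma ear_dd {S : Finset (ZMod n)} {D : Finset (ZMod n × ZMod n)} {v p q : ZMod n}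
    (hE : Ear S D v p q) : ∃ dd ∈ D, dd = (p, q) ∨ dd = (q, p) := by
  rcases hE.2.2.2.2.2.2.1 with h | h
  · exact ⟨(p, q), h, Or.inl rfl⟩
  · exact ⟨(q, p), h, Or.inr rfl⟩

lemma tcount : ∀ N (S : Finset (ZMod n)) (D : Finset (ZMod n × ZMod n)), S.card ≤ N →
    Tri S D → 3 ≤ S.card → (trisS S D).card = S.card - 2 := by
  intro N
  induction N with
  | zero => intro S D h1 _ h3; omega
  | succ N ih =>
    intro S D hSN hT h3
    by_cases h4 : 4 ≤ S.card
    · obtain ⟨v, p, q, hE⟩ := exists_ear S D hT h4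
      obtain ⟨dd, hdd, hddc⟩ := ear_dd hE
      have hvS : v ∈ S := hE.1
      have hT' := ear_tri' hT hE h4 hdd hddc
      have htris := ear_tris' hT hE h4 hdd hddc
      have hcardS' : (S.erase v).card = S.card - 1 := Finset.card_erase_of_mem hvS
      have h := ih (S.erase v) (D.erase dd) (by omega) hT' (by omega)
      rw [htris, Finset.card_erase_of_mem (ear_tri_mem hE), hcardS'] at h
      have hpos : 1 ≤ (trisS S D).card := Finset.card_pos.mpr ⟨_, ear_tri_mem hE⟩
      omega
    · have h3' : S.card = 3 := by omega
      have hD : D = ∅ := Finset.card_eq_zero.mp (by rw [hT.cardD, h3'])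
      rw [hD, tris3 h3', Finset.card_singleton]
      omega

/-- Ptolemy relation for a cyclically ordered quadruple. -/
lemma ptolemy4 {x : ZMod n → ZMod n → ℤ} (hsymm : ∀ i j, x i j = x j i)
    (hptolemy : ∀ i j k l : ZMod n, i.val < j.val → j.val < k.val → k.val < l.val →
      x i k * x j l = x i j * x k l + x i l * x j k)
    {i j k l : ZMod n} (h1 : zbtw i j l) (h2 : zbtw j k l) :
    x i k * x j l = x i j * x k l + x i l * x j k := by
  rw [zbtw_iff] at h1 h2
  have hrot : (i.val < j.val ∧ j.val < k.val ∧ k.val < l.val) ∨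
      (j.val < k.val ∧ k.val < l.val ∧ l.val < i.val) ∨
      (k.val < l.val ∧ l.val < i.val ∧ i.val < j.val) ∨
      (l.val < i.val ∧ i.val < j.val ∧ j.val < k.val) := by omega
  rcases hrot with ⟨a1, a2, a3⟩ | ⟨a1, a2, a3⟩ | ⟨a1, a2, a3⟩ | ⟨a1, a2, a3⟩
  · exact hptolemy i j k l a1 a2 a3
  · have hp := hptolemy j k l i a1 a2 a3
    rw [hsymm k i, hsymm l i, hsymm j i] at hp
    linear_combination hp
  · have hp := hptolemy k l i j a1 a2 a3
    rw [hsymm k i, hsymm l j, hsymm k j, hsymm l i] at hp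
    linear_combination hp
  · have hp := hptolemy l i j k a1 a2 a3
    rw [hsymm l j, hsymm l i, hsymm l k] at hp
    linear_combination hp
end
section
variable {n : ℕ} [NeZero n]

lemma arcS_self2 {S : Finset (ZMod n)} {i l : ZMod n} : l ∉ arcS S i l := by
  rw [mem_arcS]
  rintro ⟨-, h⟩
  exact h.2.1 rfl

theorem main_general (x : ZMod n → ZMod n → ℤ)
    (hsymm : ∀ i j, x i j = x j i)
    (hptolemy : ∀ i j k l : ZMod n, i.val < j.val → j.val < k.val → k.val < l.val →
      x i k * x j l = x i j * x k l + x i l * x j k) :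
    ∀ N (S : Finset (ZMod n)) (D : Finset (ZMod n × ZMod n)), S.card ≤ N → Tri S D →
    3 ≤ S.card →
    (∀ a b : ZMod n, a ∈ S → b ∈ S → a ≠ b → (∀ w ∈ S, ¬ zbtw a w b) → x a b = 1) →
    (∀ d ∈ D, x d.1 d.2 = 1) →
    ∀ k l : ZMod n, k ∈ S → l ∈ S → k ≠ l → x k l = (M (arcS S k l) (trisS S D) : ℤ) := by
  intro N
  induction N with
  | zero => intro S D h1 _ h3; omega
  | succ N ih =>
    intro S D hSN hT h3 hb hD k l hkS hlS hkl
    by_cases h4 : 4 ≤ S.card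
    · -- inductive step : cut an ear
      obtain ⟨v, p, q, hE⟩ := exists_ear S D hT h4
      obtain ⟨dd, hdd, hddc⟩ := ear_dd hE
      have hT' := ear_tri' hT hE h4 hdd hddc
      have htris := ear_tris' hT hE h4 hdd hddc
      have hpvq := ear_btw_pvq hE
      have hvqp := ear_btw_vqp hE
      have hmemepq := ear_tri_mem hE
      have huniq := ear_tri_unique hT hE
      obtain ⟨hvS, hpS, hqS, hvp, hvq, hpq, hpqD, hpv_adj, hvq_adj, hnd⟩ := hE
      have hS'card : (S.erase v).card = S.card - 1 := Finset.card_erase_of_mem hvS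
      have xpq : x p q = 1 := by
        rcases hddc with rfl | rfl
        · exact hD _ hdd
        · rw [hsymm]; exact hD _ hdd
      have xpv : x p v = 1 := hb p v hpS hvS (fun h => hvp h.symm) hpv_adj
      have xvq : x v q = 1 := hb v q hvS hqS hvq hvq_adj
      have hb' : ∀ a b : ZMod n, a ∈ S.erase v → b ∈ S.erase v → a ≠ b →
          (∀ w ∈ S.erase v, ¬ zbtw a w b) → x a b = 1 := by
        intro a b haS hbS hab hadj
        rcases adj_transfer2 ⟨hvS, hpS, hqS, hvp, hvq, hpq, hpqD, hpv_adj, hvq_adj, hnd⟩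
          ⟨haS, hbS, hab, hadj⟩ with h | ⟨rfl, rfl⟩
        · exact hb a b h.1 h.2.1 hab h.2.2.2
        · exact xpq
      have hD' : ∀ d ∈ D.erase dd, x d.1 d.2 = 1 := fun d hd => hD d (Finset.mem_of_mem_erase hd)
      have IH := ih (S.erase v) (D.erase dd) (by omega) hT' (by omega) hb' hD'
      have hTr'card : (trisS (S.erase v) (D.erase dd)).card = S.card - 3 := by
        rw [tcount (S.erase v).card (S.erase v) (D.erase dd) le_rfl hT' (by omega)]
        omega
      rcases eq_or_ne k v with rfl | hkv
      · -- k is the ear vertex (`v` has been substituted by `k`)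
        rcases eq_or_ne l q with rfl | hlq
        · rw [arcS_adj_empty hvq_adj, M_empty]
          exact_mod_cast xvq
        · have hql : zbtw k q l := by
            rcases btw_tri hvq hlq.symm hkl with h | h
            · exact h
            · exact absurd h (hvq_adj l hlS)
          have hqmem : q ∈ arcS S k l := mem_arcS.mpr ⟨hqS, hql⟩
          have hpnot : p ∉ arcS S k l := by
            rw [mem_arcS]
            rintro ⟨-, h⟩
            exact hpv_adj l hlS (btw_rot h)
          have honly : ∀ u ∈ arcS S k l, u ∈ ({p, k, q} : Finset (ZMod n)) → u = q := by
            intro u hu hmem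
            simp only [Finset.mem_insert, Finset.mem_singleton] at hmem
            rcases hmem with rfl | rfl | rfl
            · exact absurd hu hpnot
            · exact absurd hu arcS_self
            · rfl
          have hsplit := M_split (arcS S k l) (trisS S D) q ({p, k, q} : Finset (ZMod n))
            hqmem hmemepq (by simp) honly
          rw [← htris] at hsplit
          have hstep : arcS S k l = insert q (arcS S q l) :=
            arc_insert_succ hvq_adj hvS hqS hvq hlS (Ne.symm hkl) hlq
          have herase_q : (arcS S k l).erase q = arcS S q l := by
            rw [hstep, Finset.erase_insert arcS_self]
          have hvnotq : k ∉ arcS S q l := by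
            rw [mem_arcS]
            rintro ⟨-, h⟩
            exact hvq_adj l hlS (btw_rot h)
          have harcq : arcS (S.erase k) q l = arcS S q l := by
            rw [arcS_erase, Finset.erase_eq_of_notMem hvnotq]
          have hM2 : x q l = (M (arcS S q l) (trisS (S.erase k) (D.erase dd)) : ℤ) := by
            rw [← harcq]
            exact IH q l (Finset.mem_erase.mpr ⟨fun h => hvq h.symm, hqS⟩)
              (Finset.mem_erase.mpr ⟨Ne.symm hkl, hlS⟩) (fun h => hlq h.symm)
          rcases eq_or_ne l p with rfl | hlp
          · -- l = p : wrap-around entry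
            have hlong : arcS S k l = (S.erase l).erase k :=
              arc_long hpv_adj hpS hvS (fun h => hvp h.symm)
            have hcardarc : (arcS S k l).card = S.card - 2 := by
              rw [hlong, Finset.card_erase_of_mem (Finset.mem_erase.mpr ⟨hvp, hvS⟩),
                Finset.card_erase_of_mem hpS]
              omega
            have hM1 : M (arcS S k l) (trisS (S.erase k) (D.erase dd)) = 0 :=
              M_zero_of_card _ _ (by omega)
            have e5 : x k l = 1 := by rw [hsymm]; exact xpv
            have e6 : (M (arcS S q l) (trisS (S.erase k) (D.erase dd)) : ℤ) = 1 := by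
              rw [← hM2, hsymm]; exact xpq
            rw [hsplit, hM1, herase_q]
            push_cast
            rw [e5, e6]
            norm_num
          · -- generic case for the ear vertex on the left
            have hstep_p : arcS S p l = insert k (arcS S k l) :=
              arc_insert_succ hpv_adj hpS hvS (fun h => hvp h.symm) hlS hlp (Ne.symm hkl)
            have hknotarc : k ∉ arcS S k l := arcS_self
            have harc_p : arcS (S.erase k) p l = arcS S k l := by
              rw [arcS_erase, hstep_p, Finset.erase_insert hknotarc]
            have hM1 : x p l = (M (arcS S k l) (trisS (S.erase k) (D.erase dd)) : ℤ) := by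
              rw [← harc_p]
              exact IH p l (Finset.mem_erase.mpr ⟨fun h => hvp h.symm, hpS⟩)
                (Finset.mem_erase.mpr ⟨Ne.symm hkl, hlS⟩) (fun h => hlp h.symm)
            have hqlp : zbtw q l p := by
              rcases btw_tri hlq.symm hlp hpq.symm with h | h
              · exact h
              · exfalso
                have h' := btw_rot h
                have h2 := hpvq
                have hcase : zbtw p l k ∨ zbtw k l q := by
                  have hklv : k.val ≠ l.val := by
                    rw [← ne_iff_val_ne]; exact hkl
                  rw [zbtw_iff] at h' h2
                  rw [zbtw_iff, zbtw_iff]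
                  omega
                rcases hcase with hc | hc
                · exact hpv_adj l hlS hc
                · exact hvq_adj l hlS hc
            have hptol := ptolemy4 hsymm hptolemy (i := k) (j := q) (k := l) (l := p)
              hvqp hqlp
            rw [hsplit, herase_q]
            have e1 : x k q = 1 := xvq
            have e2 : x q p = 1 := by rw [hsymm]; exact xpq
            have e3 : x k p = 1 := by rw [hsymm]; exact xpv
            have e4 : x l p = x p l := hsymm l p
            push_cast
            rw [← hM1, ← hM2]
            rw [e1, e2, e3, e4] at hptol
            linarith
      · rcases eq_or_ne l v with rfl | hlv
        · -- l is the ear vertex (`v` has been substituted by `l`)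
          rcases eq_or_ne k p with rfl | hkp
          · rw [arcS_adj_empty hpv_adj, M_empty]
            exact_mod_cast xpv
          · have hpk : zbtw k p l := by
              rcases btw_tri hkp (fun h => hvp h.symm) hkl with h | h
              · exact h
              · exact absurd (btw_rot (btw_rot h)) (hpv_adj k hkS)
            have hpmem : p ∈ arcS S k l := mem_arcS.mpr ⟨hpS, hpk⟩
            have hqnot : q ∉ arcS S k l := by
              rw [mem_arcS]
              rintro ⟨-, h⟩
              exact hvq_adj k hkS (btw_rot (btw_rot h))
            have honly : ∀ u ∈ arcS S k l, u ∈ ({p, l, q} : Finset (ZMod n)) → u = p := by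
              intro u hu hmem
              simp only [Finset.mem_insert, Finset.mem_singleton] at hmem
              rcases hmem with rfl | rfl | rfl
              · rfl
              · exact absurd hu arcS_self2
              · exact absurd hu hqnot
            have hsplit := M_split (arcS S k l) (trisS S D) p ({p, l, q} : Finset (ZMod n))
              hpmem hmemepq (by simp) honly
            rw [← htris] at hsplit
            have hstep : arcS S k l = insert p (arcS S k p) :=
              arc_insert_pred hpv_adj hpS hvS (fun h => hvp h.symm) hkS hkp hkl
            have herase_p : (arcS S k l).erase p = arcS S k p := by
              rw [hstep, Finset.erase_insert arcS_self2]
            have hvnotp : l ∉ arcS S k p := by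
              rw [mem_arcS]
              rintro ⟨-, h⟩
              exact hpv_adj k hkS (btw_rot (btw_rot h))
            have harcp : arcS (S.erase l) k p = arcS S k p := by
              rw [arcS_erase, Finset.erase_eq_of_notMem hvnotp]
            have hM2 : x k p = (M (arcS S k p) (trisS (S.erase l) (D.erase dd)) : ℤ) := by
              rw [← harcp]
              exact IH k p (Finset.mem_erase.mpr ⟨hkl, hkS⟩)
                (Finset.mem_erase.mpr ⟨fun h => hvp h.symm, hpS⟩) hkp
            rcases eq_or_ne k q with rfl | hkq
            · -- k = q : wrap-around entry
              have hlong : arcS S k l = (S.erase l).erase k :=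
                arc_long hvq_adj hvS hqS hvq
              have hcardarc : (arcS S k l).card = S.card - 2 := by
                rw [hlong, Finset.card_erase_of_mem (Finset.mem_erase.mpr
                  ⟨hkl, hqS⟩), Finset.card_erase_of_mem hvS]
                omega
              have hM1 : M (arcS S k l) (trisS (S.erase l) (D.erase dd)) = 0 :=
                M_zero_of_card _ _ (by omega)
              have e5 : x k l = 1 := by rw [hsymm]; exact xvq
              have e6 : (M (arcS S k p) (trisS (S.erase l) (D.erase dd)) : ℤ) = 1 := by
                rw [← hM2, hsymm]; exact xpq
              rw [hsplit, hM1, herase_p]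
              push_cast
              rw [e5, e6]
              norm_num
            · -- generic case for the ear vertex on the right
              have hstep_q : arcS S k q = insert l (arcS S k l) :=
                arc_insert_pred hvq_adj hvS hqS hvq hkS hkl hkq
              have hlnotarc : l ∉ arcS S k l := arcS_self2
              have harc_q : arcS (S.erase l) k q = arcS S k l := by
                rw [arcS_erase, hstep_q, Finset.erase_insert hlnotarc]
              have hM1 : x k q = (M (arcS S k l) (trisS (S.erase l) (D.erase dd)) : ℤ) := by
                rw [← harc_q]
                exact IH k q (Finset.mem_erase.mpr ⟨hkl, hkS⟩)
                  (Finset.mem_erase.mpr ⟨fun h => hvq h.symm, hqS⟩) hkq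
              have hqkp : zbtw q k p := by
                rcases btw_tri (fun h => hkq h.symm) hkp hpq.symm with h | h
                · exact h
                · exfalso
                  have h' := btw_rot h
                  have h2 := hpvq
                  have hcase : zbtw p k l ∨ zbtw l k q := by
                    have hklv : k.val ≠ l.val := by
                      rw [← ne_iff_val_ne]; exact hkl
                    rw [zbtw_iff] at h' h2
                    rw [zbtw_iff, zbtw_iff]
                    omega
                  rcases hcase with hc | hc
                  · exact hpv_adj k hkS hc
                  · exact hvq_adj k hkS hc
              have hptol := ptolemy4 hsymm hptolemy (i := l) (j := q) (k := k) (l := p)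
                hvqp hqkp
              rw [hsplit, herase_p]
              have e1 : x q p = 1 := by rw [hsymm]; exact xpq
              have e2 : x l q = 1 := xvq
              have e3 : x l p = 1 := by rw [hsymm]; exact xpv
              have e4 : x q k = x k q := hsymm q k
              have e5 : x l k = x k l := hsymm l k
              push_cast
              rw [← hM1, ← hM2]
              rw [e1, e2, e3, e4, e5] at hptol
              linarith
        · -- neither k nor l is the ear vertex
          have hkS' : k ∈ S.erase v := Finset.mem_erase.mpr ⟨hkv, hkS⟩
          have hlS' : l ∈ S.erase v := Finset.mem_erase.mpr ⟨hlv, hlS⟩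
          by_cases hbtw : zbtw k v l
          · have hforced := M_forced (arcS S k l) (trisS S D) v ({p, v, q} : Finset (ZMod n))
              (mem_arcS.mpr ⟨hvS, hbtw⟩) hmemepq (by simp) huniq
            rw [← htris, ← arcS_erase] at hforced
            rw [hforced]
            exact IH k l hkS' hlS' hkl
          · have hwnot : ∀ w ∈ arcS S k l, w ∉ ({p, v, q} : Finset (ZMod n)) := by
              intro w hw hmem
              rw [mem_arcS] at hw
              simp only [Finset.mem_insert, Finset.mem_singleton] at hmem
              have hlvk : zbtw l v k := by
                rcases btw_tri hkv (Ne.symm hlv) hkl with h | h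
                · exact absurd h hbtw
                · exact btw_rot h
              rcases hmem with rfl | rfl | rfl
              · refine hpv_adj l hlS ?_
                have h1 := hw.2
                rw [zbtw_iff] at h1 hlvk ⊢
                omega
              · exact hbtw hw.2
              · refine hvq_adj k hkS ?_
                have h1 := hw.2
                rw [zbtw_iff] at h1 hlvk ⊢
                omega
            have herase := M_erase_tri (arcS S k l) (trisS S D) ({p, v, q} : Finset (ZMod n))
              hwnot
            rw [← htris] at herase
            have hvnot : v ∉ arcS S k l := by
              rw [mem_arcS]
              rintro ⟨-, h⟩
              exact hbtw h
            have harc : arcS (S.erase v) k l = arcS S k l := by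
              rw [arcS_erase, Finset.erase_eq_of_notMem hvnot]
            rw [herase, ← harc]
            exact IH k l hkS' hlS' hkl
    · -- base case : a triangle
      have h3' : S.card = 3 := by omega
      have hDe : D = ∅ := Finset.card_eq_zero.mp (by rw [hT.cardD, h3'])
      subst hDe
      rw [tris3 h3']
      have hlk : l ∈ S.erase k := Finset.mem_erase.mpr ⟨Ne.symm hkl, hlS⟩
      have hcard1 : ((S.erase k).erase l).card = 1 := by
        rw [Finset.card_erase_of_mem hlk, Finset.card_erase_of_mem hkS]
        omega
      obtain ⟨t, ht⟩ := Finset.card_eq_one.mp hcard1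
      have htS : t ∈ S ∧ t ≠ k ∧ t ≠ l := by
        have : t ∈ (S.erase k).erase l := ht ▸ Finset.mem_singleton_self t
        rw [Finset.mem_erase, Finset.mem_erase] at this
        exact ⟨this.2.2, this.2.1, this.1⟩
      have hsub : arcS S k l ⊆ {t} := by
        intro w hw
        rw [mem_arcS] at hw
        rw [← ht, Finset.mem_erase, Finset.mem_erase]
        exact ⟨hw.2.2.1, hw.2.1, hw.1⟩
      rcases Finset.subset_singleton_iff.mp hsub with harc | harc
      · rw [harc, M_empty]
        refine (hb k l hkS hlS hkl ?_).trans (by norm_num)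
        intro w hwS hw
        have : w ∈ arcS S k l := mem_arcS.mpr ⟨hwS, hw⟩
        rw [harc] at this
        exact Finset.notMem_empty _ this
      · have htmem : zbtw k t l := by
          have : t ∈ arcS S k l := harc ▸ Finset.mem_singleton_self t
          exact (mem_arcS.mp this).2
        rw [harc, M_forced {t} {S} t S (Finset.mem_singleton_self t)
          (Finset.mem_singleton_self S) htS.1 (fun s hs _ => Finset.mem_singleton.mp hs),
          Finset.erase_singleton, Finset.erase_singleton, M_empty]
        rw [hsymm]
        refine (hb l k hlS hkS (Ne.symm hkl) ?_).trans (by norm_num)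
        intro w hwS hw
        have hwt : w = t := by
          have hsub2 : w ∈ ((S.erase k).erase l) := by
            rw [Finset.mem_erase, Finset.mem_erase]
            exact ⟨hw.1, hw.2.1, hwS⟩
          rw [ht, Finset.mem_singleton] at hsub2
          exact hsub2
        subst hwt
        rw [zbtw_iff] at hw htmem
        omega
end
section
variable {n : ℕ} [NeZero n]

lemma val_one' (hn : 2 ≤ n) : (1 : ZMod n).val = 1 := by
  haveI : Fact (1 < n) := ⟨hn⟩
  exact ZMod.val_one n

lemma sub_val_one {a w : ZMod n} (hn : 2 ≤ n) (h : w - a = 1) : (w - a).val = 1 := by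
  rw [h, val_one' hn]

lemma univ_adj_iff (hn : 2 ≤ n) {a b : ZMod n} (hab : a ≠ b) :
    (∀ w : ZMod n, ¬ zbtw a w b) ↔ b = a + 1 := by
  constructor
  · intro h
    by_contra hne
    apply h (a + 1)
    have hval : (a + 1 - a).val = 1 := sub_val_one hn (by ring)
    have hba : (b - a).val ≠ 0 := by
      intro h0
      exact hab (sub_eq_zero.mp (val_inj' (h0.trans (ZMod.val_zero (n := n)).symm))).symm
    have hba1 : (b - a).val ≠ 1 := by
      intro h1
      apply hne
      have : b - a = 1 := val_inj' (h1.trans (val_one' hn).symm)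
      linear_combination this
    refine ⟨?_, ?_, ?_⟩
    · intro hc
      rw [hc] at hval
      simp only [sub_self, ZMod.val_zero] at hval
      omega
    · intro hc
      rw [hc] at hval
      omega
    · omega
  · rintro rfl w hw
    have : (w - a).val < 1 := by
      have := hw.2.2
      rwa [sub_val_one hn (by ring : a + 1 - a = 1)] at this
    have h0 : (0 : ZMod n).val = 0 := ZMod.val_zero
    exact hw.1 (sub_eq_zero.mp (val_inj' (by omega : (w - a).val = (0 : ZMod n).val)))

lemma tri_univ (hn : 4 ≤ n) (T : PolygonTriangulation n) :
    Tri (Finset.univ : Finset (ZMod n)) T.diags := by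
  have hcard : (Finset.univ : Finset (ZMod n)).card = n := by
    rw [Finset.card_univ, ZMod.card]
  constructor
  · intro d _; exact Finset.mem_univ _
  · intro d _; exact Finset.mem_univ _
  · exact T.lt_of_mem
  · intro d hd
    have hlt := T.lt_of_mem d hd
    have hnb := (T.not_boundary d hd).1
    refine ⟨d.1 + 1, Finset.mem_univ _, ?_, ?_, ?_⟩
    · intro hc
      have : (d.1 + 1 - d.1).val = 1 := sub_val_one (by omega) (by ring)
      rw [hc] at this
      simp only [sub_self, ZMod.val_zero] at this
      omega
    · intro hc
      have h1 : (d.1 + 1 - d.1).val = 1 := sub_val_one (by omega) (by ring)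
      have h2 : (d.2 - d.1).val = d.2.val - d.1.val := ZMod.val_sub (le_of_lt hlt)
      rw [hc] at h1
      omega
    · have h1 : (d.1 + 1 - d.1).val = 1 := sub_val_one (by omega) (by ring)
      have h2 : (d.2 - d.1).val = d.2.val - d.1.val := ZMod.val_sub (le_of_lt hlt)
      omega
  · intro d hd
    have hlt := T.lt_of_mem d hd
    have hnb := (T.not_boundary d hd).2
    have hv1 := ZMod.val_lt d.1
    have hv2 := ZMod.val_lt d.2
    have h2 : (d.1 - d.2).val = d.1.val + n - d.2.val := by
      rw [val_sub' d.1 d.2, if_neg (by omega)]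
    have hbig : 1 < (d.1 - d.2).val := by
      rcases Nat.lt_or_ge d.2.val (n - 1) with h | h
      · omega
      · have hd2 : d.2.val = n - 1 := by omega
        have hd1 : d.1.val ≠ 0 := fun hc => hnb ⟨hc, hd2⟩
        omega
    refine ⟨d.2 + 1, Finset.mem_univ _, ?_, ?_, ?_⟩
    · intro hc
      have : (d.2 + 1 - d.2).val = 1 := sub_val_one (by omega) (by ring)
      rw [hc] at this
      simp only [sub_self, ZMod.val_zero] at this
      omega
    · intro hc
      have h1 : (d.2 + 1 - d.2).val = 1 := sub_val_one (by omega) (by ring)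
      rw [hc] at h1
      omega
    · have h1 : (d.2 + 1 - d.2).val = 1 := sub_val_one (by omega) (by ring)
      omega
  · exact T.noncrossing
  · rw [T.card_diags, hcard]

lemma strictInterval_eq (k l : ZMod n) :
    strictInterval n k l = arcS (Finset.univ : Finset (ZMod n)) k l := by
  ext w
  rw [strictInterval, arcS, Finset.mem_filter, Finset.mem_filter]
  exact Iff.rfl

lemma triangles_eq (hn : 4 ≤ n) (T : PolygonTriangulation n) :
    triangles T = trisS (Finset.univ : Finset (ZMod n)) T.diags := by
  ext s
  rw [mem_trisS, triangles, Finset.mem_filter]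
  simp only [Finset.mem_univ, true_and]
  constructor
  · rintro ⟨hc, he⟩
    refine ⟨hc, fun i hi j hj hij => ?_⟩
    rcases he i hi j hj hij with h | h | h | h
    · exact Or.inl h
    · exact Or.inr (Or.inl h)
    · refine Or.inr (Or.inr (Or.inl ⟨Finset.mem_univ _, Finset.mem_univ _, hij, ?_⟩))
      intro w _
      exact ((univ_adj_iff (by omega) hij).mpr h w)
    · refine Or.inr (Or.inr (Or.inr ⟨Finset.mem_univ _, Finset.mem_univ _, Ne.symm hij, ?_⟩))
      intro w _
      exact ((univ_adj_iff (by omega) (Ne.symm hij)).mpr h w)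
  · rintro ⟨hc, he⟩
    refine ⟨hc, fun i hi j hj hij => ?_⟩
    rcases he i hi j hj hij with h | h | h | h
    · exact Or.inl h
    · exact Or.inr (Or.inl h)
    · refine Or.inr (Or.inr (Or.inl ?_))
      exact (univ_adj_iff (by omega) hij).mp (fun w => h.2.2.2 w (Finset.mem_univ _))
    · refine Or.inr (Or.inr (Or.inr ?_))
      exact (univ_adj_iff (by omega) (Ne.symm hij)).mp (fun w => h.2.2.2 w (Finset.mem_univ _))

lemma matchNum_eq_M (T : PolygonTriangulation n) (k l : ZMod n) :
    matchNum T k l = M (strictInterval n k l) (triangles T) := rfl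
end


/-- Specializing all initial cluster variables (the diagonals of the triangulation `T`) and
all frozen variables to 1 sends each cluster variable `x k l` of the type `A_{n-3}` cluster
algebra to the corresponding entry (matching number) of the closed integral frieze of `T`. -/
theorem cluster_specialization_gives_frieze (n : ℕ) [NeZero n] (hn : 4 ≤ n)
    (T : PolygonTriangulation n) (x : ZMod n → ZMod n → ℤ)
    (hsymm : ∀ i j, x i j = x j i) (hdiag : ∀ i, x i i = 0)
    (hptolemy : ∀ i j k l : ZMod n, i.val < j.val → j.val < k.val → k.val < l.val →
      x i k * x j l = x i j * x k l + x i l * x j k)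
    (hfrozen : ∀ i : ZMod n, x i (i + 1) = 1)
    (hinit : ∀ d ∈ T.diags, x d.1 d.2 = 1) :
    ∀ k l : ZMod n, k ≠ l → x k l = (matchNum T k l : ℤ) := by
  intro k l hkl
  have hcard : (Finset.univ : Finset (ZMod n)).card = n := by
    rw [Finset.card_univ, ZMod.card]
  have hb : ∀ a b : ZMod n, a ∈ (Finset.univ : Finset (ZMod n)) →
      b ∈ (Finset.univ : Finset (ZMod n)) → a ≠ b →
      (∀ w ∈ (Finset.univ : Finset (ZMod n)), ¬ zbtw a w b) → x a b = 1 := by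
    intro a b _ _ hab hadj
    have := (univ_adj_iff (by omega) hab).mp (fun w => hadj w (Finset.mem_univ _))
    rw [this]
    exact hfrozen a
  have := main_general x hsymm hptolemy n (Finset.univ : Finset (ZMod n)) T.diags
    (by omega) (tri_univ hn T) (by omega) hb hinit k l (Finset.mem_univ _)
    (Finset.mem_univ _) hkl
  rw [this, matchNum_eq_M, strictInterval_eq, triangles_eq hn T]
end

section
/- If (a_1, ..., a_n) is the quiddity sequence of an infinite n-periodic integral frieze, then for any positive integer b, the sequence (a_1 + b, a_2, ..., a_n) is also the quiddity sequence of an infinite n-periodic integral frieze. -/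
/-- An infinite `n`-periodic integral frieze pattern: a row of 0s, a row of 1s, then
infinitely many rows of positive integers, satisfying the diamond rule and `n`-periodicity. -/
def IsInfiniteFrieze (n : ℕ) (a : ℤ → ℤ → ℤ) : Prop :=
  (∀ i : ℤ, a i i = 0) ∧
  (∀ i : ℤ, a i (i + 1) = 1) ∧
  (∀ i j : ℤ, i + 2 ≤ j → 0 < a i j) ∧
  (∀ i j : ℤ, i + 1 ≤ j →
    a i j * a (i + 1) (j + 1) - a i (j + 1) * a (i + 1) j = 1) ∧
  (∀ i j : ℤ, a (i + n) (j + n) = a i j)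

/-- `q : ℤ → ℤ` is the quiddity sequence of an infinite `n`-periodic integral frieze. -/
def IsInfQuiddity (n : ℕ) (q : ℤ → ℤ) : Prop :=
  (∀ i : ℤ, q (i + n) = q i) ∧
  ∃ a : ℤ → ℤ → ℤ, IsInfiniteFrieze n a ∧ ∀ i : ℤ, a i (i + 2) = q i

/-- Continuant-style recursion building a frieze from a quiddity sequence. -/
def friezeA (q : ℤ → ℤ) (i : ℤ) : ℕ → ℤ
  | 0 => 0
  | 1 => 1
  | d + 2 => q (i + d) * friezeA q i (d + 1) - friezeA q i d

lemma friezeA_diamond (q : ℤ → ℤ) (i : ℤ) :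
    ∀ e : ℕ, friezeA q i (e + 1) * friezeA q (i + 1) (e + 1) -
      friezeA q i (e + 2) * friezeA q (i + 1) e = 1 := by
  intro e
  induction e with
  | zero => simp [friezeA]
  | succ e ih =>
    have hX : friezeA q i (e + 3) = q (i + (e + 1 : ℕ)) * friezeA q i (e + 2) -
        friezeA q i (e + 1) := rfl
    have hY : friezeA q (i + 1) (e + 2) = q ((i + 1) + e) * friezeA q (i + 1) (e + 1) -
        friezeA q (i + 1) e := rfl
    have harg : (i + (e + 1 : ℕ) : ℤ) = (i + 1) + e := by push_cast; ring
    rw [harg] at hX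
    show friezeA q i (e + 2) * friezeA q (i + 1) (e + 2) -
      friezeA q i (e + 3) * friezeA q (i + 1) (e + 1) = 1
    rw [hX, hY]
    linear_combination ih

lemma friezeA_periodic (n : ℕ) (q : ℤ → ℤ) (hper : ∀ i, q (i + n) = q i) (i : ℤ) :
    ∀ d : ℕ, friezeA q (i + n) d = friezeA q i d ∧
      friezeA q (i + n) (d + 1) = friezeA q i (d + 1) := by
  intro d
  induction d with
  | zero => simp [friezeA]
  | succ d ih =>
    obtain ⟨h0, h1⟩ := ih
    refine ⟨h1, ?_⟩
    show friezeA q (i + n) (d + 2) = friezeA q i (d + 2)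
    have hL : friezeA q (i + n) (d + 2) = q ((i + n) + d) * friezeA q (i + n) (d + 1) -
        friezeA q (i + n) d := rfl
    have hR : friezeA q i (d + 2) = q (i + d) * friezeA q i (d + 1) - friezeA q i d := rfl
    have hq : q ((i + n) + d) = q (i + d) := by
      have := hper (i + d)
      have harg : ((i + n) + d : ℤ) = (i + d) + n := by ring
      rw [harg, this]
    rw [hL, hR, hq, h0, h1]

/-- Every frieze satisfies the continuant row recurrence (proved by downward induction
on the row index). -/
lemma frieze_row_rec (n : ℕ) (a : ℤ → ℤ → ℤ) (ha : IsInfiniteFrieze n a) (q : ℤ → ℤ)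
    (haq : ∀ i : ℤ, a i (i + 2) = q i) :
    ∀ k : ℕ, ∀ j : ℤ, a (j - k) (j + 2) = q j * a (j - k) (j + 1) - a (j - k) j := by
  obtain ⟨h0, h1, hpos, hdia, _⟩ := ha
  intro k
  induction k with
  | zero =>
    intro j
    simp only [Nat.cast_zero, sub_zero]
    rw [haq j, h1 j, h0 j]
    ring
  | succ k ih =>
    intro j
    set i : ℤ := j - (k + 1 : ℕ) with hi
    have hik : i = j - k - 1 := by push_cast [hi]; ring
    have hi1 : i + 1 = j - (k : ℕ) := by rw [hik]; ring
    have hij : i + 1 ≤ j := by rw [hi1]; omega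
    have D1 := hdia i (j + 1) (by omega)
    rw [show (j + 1 + 1 : ℤ) = j + 2 by ring] at D1
    have D2 := hdia i j hij
    have ih' : a (i + 1) (j + 2) = q j * a (i + 1) (j + 1) - a (i + 1) j := by
      rw [hi1]; exact ih j
    have hA : 0 < a (i + 1) (j + 1) := by
      rcases Nat.eq_zero_or_pos k with hk | hk
      · have : j + 1 = (i + 1) + 1 := by rw [hik, hk]; push_cast; ring
        rw [this, h1]; norm_num
      · exact hpos (i + 1) (j + 1) (by omega)
    have key : (a i (j + 2) - (q j * a i (j + 1) - a i j)) * a (i + 1) (j + 1) = 0 := by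
      linear_combination (-1) * D1 + a i (j + 1) * ih' + D2
    rcases mul_eq_zero.mp key with h | h
    · linarith
    · linarith

/-- The continuant recursion reproduces the frieze entries. -/
lemma friezeA_eq (n : ℕ) (a : ℤ → ℤ → ℤ) (ha : IsInfiniteFrieze n a) (q : ℤ → ℤ)
    (haq : ∀ i : ℤ, a i (i + 2) = q i) (i : ℤ) :
    ∀ d : ℕ, friezeA q i d = a i (i + d) ∧ friezeA q i (d + 1) = a i (i + d + 1) := by
  intro d
  induction d with
  | zero =>
    constructor
    · simp [friezeA, ha.1 i]
    · simpa [friezeA] using (ha.2.1 i).symm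
  | succ d ih =>
    obtain ⟨e0, e1⟩ := ih
    have hcast : (i + (d + 1 : ℕ) : ℤ) = i + d + 1 := by push_cast; ring
    refine ⟨by rw [hcast]; exact e1, ?_⟩
    have hrec : friezeA q i (d + 2) = q (i + d) * friezeA q i (d + 1) - friezeA q i d := rfl
    have hrow := frieze_row_rec n a ha q haq d (i + d)
    have hrw : (i + d - (d : ℕ) : ℤ) = i := by ring
    rw [hrw] at hrow
    have hc2 : (i + (d + 1 : ℕ) + 1 : ℤ) = i + d + 2 := by push_cast; ring
    rw [hc2, hrec, e0, e1]
    have : (i + d + 2 : ℤ) = (i + d) + 2 := by ring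
    rw [this, hrow]

/-- Positivity of the continuant values of a frieze's quiddity sequence. -/
lemma friezeA_pos_of_frieze (n : ℕ) (a : ℤ → ℤ → ℤ) (ha : IsInfiniteFrieze n a) (q : ℤ → ℤ)
    (haq : ∀ i : ℤ, a i (i + 2) = q i) (i : ℤ) (d : ℕ) : 0 < friezeA q i (d + 1) := by
  have h := (friezeA_eq n a ha q haq i d).2
  rw [h]
  rcases Nat.eq_zero_or_pos d with hd | hd
  · subst hd
    have : (i + (0 : ℕ) + 1 : ℤ) = i + 1 := by push_cast; ring
    rw [this, ha.2.1 i]; norm_num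
  · exact ha.2.2.1 i _ (by omega)

/-- Comparison: increasing the quiddity entries increases the continuants
(in ratio and absolutely), given positivity for the smaller sequence. -/
lemma friezeA_compare (q q' : ℤ → ℤ) (hle : ∀ j : ℤ, q j ≤ q' j) (i : ℤ)
    (hApos : ∀ d : ℕ, 0 < friezeA q i (d + 1)) :
    ∀ d : ℕ, friezeA q i (d + 1) ≤ friezeA q' i (d + 1) ∧
      friezeA q i (d + 1) * friezeA q' i d ≤ friezeA q' i (d + 1) * friezeA q i d := by
  intro d
  induction d with
  | zero => simp [friezeA]
  | succ d ih =>
    obtain ⟨ih1, ih2⟩ := ih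
    have hAr : friezeA q i (d + 2) = q (i + d) * friezeA q i (d + 1) - friezeA q i d := rfl
    have hBr : friezeA q' i (d + 2) = q' (i + d) * friezeA q' i (d + 1) - friezeA q' i d := rfl
    have hApos1 := hApos d
    have hBpos1 : 0 < friezeA q' i (d + 1) := lt_of_lt_of_le hApos1 ih1
    have e : friezeA q' i (d + 2) * friezeA q i (d + 1) -
        friezeA q i (d + 2) * friezeA q' i (d + 1) =
        (q' (i + d) - q (i + d)) * (friezeA q' i (d + 1) * friezeA q i (d + 1)) +
        (friezeA q' i (d + 1) * friezeA q i d -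
          friezeA q i (d + 1) * friezeA q' i d) := by
      rw [hAr, hBr]; ring
    have t1 : 0 ≤ (q' (i + d) - q (i + d)) *
        (friezeA q' i (d + 1) * friezeA q i (d + 1)) :=
      mul_nonneg (by linarith [hle (i + d)]) (mul_nonneg hBpos1.le hApos1.le)
    have hratio : friezeA q i (d + 2) * friezeA q' i (d + 1) ≤
        friezeA q' i (d + 2) * friezeA q i (d + 1) := by linarith [e, t1, ih2]
    refine ⟨?_, hratio⟩
    have hA2pos := hApos (d + 1)
    have h2 : friezeA q i (d + 2) * friezeA q i (d + 1) ≤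
        friezeA q i (d + 2) * friezeA q' i (d + 1) :=
      mul_le_mul_of_nonneg_left ih1 hA2pos.le
    have h3 : friezeA q i (d + 2) * friezeA q i (d + 1) ≤
        friezeA q' i (d + 2) * friezeA q i (d + 1) := le_trans h2 hratio
    exact le_of_mul_le_mul_right h3 hApos1

/-- Any pointwise enlargement of a quiddity sequence which is still `n`-periodic
is again a quiddity sequence. -/
lemma isInfQuiddity_mono (n : ℕ) (q q' : ℤ → ℤ) (hq : IsInfQuiddity n q)
    (hle : ∀ j : ℤ, q j ≤ q' j) (hper' : ∀ i : ℤ, q' (i + n) = q' i) :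
    IsInfQuiddity n q' := by
  obtain ⟨hper, a, ha, haq⟩ := hq
  have hApos : ∀ i : ℤ, ∀ d : ℕ, 0 < friezeA q i (d + 1) :=
    fun i d => friezeA_pos_of_frieze n a ha q haq i d
  have hBpos : ∀ i : ℤ, ∀ d : ℕ, 0 < friezeA q' i (d + 1) := by
    intro i d
    exact lt_of_lt_of_le (hApos i d) (friezeA_compare q q' hle i (hApos i) d).1
  refine ⟨hper', fun i j => if i ≤ j then friezeA q' i (j - i).toNat else 0, ?_, ?_⟩
  · refine ⟨?_, ?_, ?_, ?_, ?_⟩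
    · intro i; simp [friezeA]
    · intro i
      have h : ((i + 1 - i).toNat) = 1 := by omega
      simp only [show i ≤ i + 1 by omega, if_pos, h]
      simp [friezeA]
    · intro i j hij
      have h1 : i ≤ j := by omega
      have h2 : (j - i).toNat = ((j - i).toNat - 1) + 1 := by omega
      simp only [if_pos h1]
      rw [h2]
      exact hBpos i _
    · intro i j hij
      have h1 : i ≤ j := by omega
      have h2 : i ≤ j + 1 := by omega
      have h3 : i + 1 ≤ j + 1 := by omega
      have h4 : i + 1 ≤ j := hij
      set d : ℕ := (j - (i + 1)).toNat with hd
      have e1 : (j - i).toNat = d + 1 := by omega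
      have e2 : (j + 1 - i).toNat = d + 2 := by omega
      have e3 : (j + 1 - (i + 1)).toNat = d + 1 := by omega
      simp only [if_pos h1, if_pos h2, if_pos h3, if_pos h4, e1, e2, e3]
      exact friezeA_diamond q' i d
    · intro i j
      have e1 : (j + n - (i + n)) = j - i := by ring
      by_cases h : i ≤ j
      · have h' : i + (n : ℤ) ≤ j + n := by omega
        simp only [if_pos h, if_pos h', e1]
        exact (friezeA_periodic n q' hper' i (j - i).toNat).1
      · have h' : ¬ (i + (n : ℤ) ≤ j + n) := by omega
        simp only [if_neg h, if_neg h']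
  · intro i
    have h : i ≤ i + 2 := by omega
    have e : (i + 2 - i).toNat = 2 := by omega
    simp only [if_pos h, e]
    show q' (i + (0 : ℕ)) * friezeA q' i 1 - friezeA q' i 0 = q' i
    simp [friezeA]

/-- Increasing one entry of the quiddity sequence of an infinite `n`-periodic frieze by any
positive integer `b` again yields the quiddity sequence of an infinite `n`-periodic frieze. -/
theorem infinite_quiddity_add (n : ℕ) (hn : 1 ≤ n) (q : ℤ → ℤ)
    (hq : IsInfQuiddity n q) (b : ℤ) (hb : 0 < b) :
    IsInfQuiddity n (fun i => if (i : ZMod n) = (1 : ZMod n) then q i + b else q i) := by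
  apply isInfQuiddity_mono n q _ hq
  · intro j
    split <;> linarith
  · intro i
    have hcast : ((i + (n : ℤ) : ℤ) : ZMod n) = (i : ZMod n) := by
      push_cast
      simp
    simp only [hcast, hq.1 i]
end

section
/- If (a_1, ..., a_n), n ≥ 1, is the quiddity sequence of an infinite periodic integral frieze, then after finitely many 'cutting' reductions (removing an entry equal to 1 and decreasing its two cyclic neighbors by 1) one reaches a quiddity sequence all of whose entries are at least 2. -/
/-- The cutting operation on an `n`-periodic quiddity sequence: an entry `q i = 1` is removed
and its two cyclic neighbours are decreased by 1, giving an `(n-1)`-periodic sequence. -/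
def CutsTo (n : ℕ) (q q' : ℤ → ℤ) : Prop :=
  ∃ i : ℤ, q i = 1 ∧ (∀ j : ℤ, q' (j + ((n : ℤ) - 1)) = q' j) ∧
    q' (i + 1) = q (i + 1) - 1 ∧
    (∀ j : ℤ, i + 2 ≤ j → j ≤ i + n - 2 → q' j = q j) ∧
    q' (i + n - 1) = q (i + n - 1) - 1

namespace Frieze

variable {n : ℕ} {a : ℤ → ℤ → ℤ}

lemma pos' (h : IsInfiniteFrieze n a) {x y : ℤ} (hxy : x + 1 ≤ y) : 0 < a x y := by
  rcases eq_or_lt_of_le hxy with h1 | h1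
  · rw [← h1, h.2.1]; norm_num
  · exact h.2.2.1 x y (by omega)

/-- helper for ediv computations -/
lemma ediv_eq {x m N : ℤ} (hN : 0 < N) (h1 : N * m ≤ x) (h2 : x < N * (m + 1)) :
    x / N = m := by
  have hx : x = (x - N * m) + m * N := by ring
  rw [hx, Int.add_mul_ediv_right _ _ (ne_of_gt hN),
    Int.ediv_eq_zero_of_lt (by omega) (by nlinarith), zero_add]

lemma rowrec (h : IsInfiniteFrieze n a) :
    ∀ (k : ℕ) (x : ℤ), a x (x + 1 + k + 1) =
      a x (x + 1 + k) * a (x + k) (x + k + 2) - a x (x + k) := by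
  intro k
  induction k with
  | zero =>
    intro x
    simp only [Nat.cast_zero, add_zero]
    rw [show x + 1 + 1 = x + 2 by ring, h.1, h.2.1]
    ring
  | succ k ih =>
    intro x
    have ihx := ih (x + 1)
    -- abbreviations
    set y : ℤ := x + 2 + k with hy
    have e1 : x + 1 + (k+1 : ℕ) = y := by push_cast; ring
    have e2 : x + (k+1:ℕ) = y - 1 := by push_cast; ring
    have e3 : x + (k+1:ℕ) + 2 = y + 1 := by push_cast; ring
    have e4 : x + 1 + 1 + k = y := by push_cast; ring
    have e5 : x + 1 + k = y - 1 := by push_cast; ring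
    have e6 : x + 1 + k + 2 = y + 1 := by push_cast; ring
    have e7 : x + 1 + 1 + (k:ℕ) + 1 = y + 1 := by push_cast; ring
    rw [e1, e3, e2]
    rw [e7, e4, e6, e5] at ihx
    -- ihx : a (x+1) (y+1) = a (x+1) y * a (y-1) (y+1) - a (x+1) (y-1)
    have D1 := h.2.2.2.1 x (y - 1) (by omega)
    have D2 := h.2.2.2.1 x y (by omega)
    have hyy : y - 1 + 1 = y := by ring
    have hyy2 : y - 1 + 1 + 1 = y + 1 := by ring
    rw [hyy] at D1
    have hpos : 0 < a (x + 1) y := pos' h (by omega)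
    have key : a (x+1) y * (a x (y+1) - (a x y * a (y-1) (y+1) - a x (y-1))) = 0 := by
      linear_combination (-1 : ℤ) * D2 + a x y * ihx + D1
    have := mul_eq_zero.mp key
    rcases this with h0 | h0
    · omega
    · linarith

lemma colrec (h : IsInfiniteFrieze n a) :
    ∀ (k : ℕ) (x : ℤ), a x (x + 2 + k) =
      a x (x + 2) * a (x + 1) (x + 2 + k) - a (x + 2) (x + 2 + k) := by
  intro k x
  induction k with
  | zero =>
    simp only [Nat.cast_zero, add_zero]
    rw [show x + 2 = x + 1 + 1 by ring, h.2.1, h.1]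
    ring
  | succ k ih =>
    set y : ℤ := x + 2 + k with hy
    have e1 : x + 2 + (k+1:ℕ) = y + 1 := by push_cast; ring
    rw [e1]
    have D1 := h.2.2.2.1 x y (by omega)
    have D2 := h.2.2.2.1 (x+1) y (by omega)
    have e2 : x + 1 + 1 = x + 2 := by ring
    rw [e2] at D2
    have hpos : 0 < a (x + 1) y := pos' h (by omega)
    have key : a (x+1) y * ((a x (x+2) * a (x+1) (y+1) - a (x+2) (y+1)) - a x (y+1)) = 0 := by
      linear_combination (-(a (x+1) (y+1))) * ih + D1 - D2
    rcases mul_eq_zero.mp key with h0 | h0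
    · omega
    · linarith

lemma per_mul (h : IsInfiniteFrieze n a) (m : ℤ) (x y : ℤ) :
    a (x + n * m) (y + n * m) = a x y := by
  induction m using Int.induction_on with
  | zero => simp
  | succ k ih =>
    have e : (k:ℤ) + 1 = k + 1 := rfl
    have e1 : x + n * (k + 1) = (x + n * k) + n := by ring
    have e2 : y + n * (k + 1) = (y + n * k) + n := by ring
    rw [e1, e2, h.2.2.2.2, ih]
  | pred k ih =>
    have e1 : x + n * (-(k:ℤ) - 1) + n = x + n * (-k) := by ring
    have e2 : y + n * (-(k:ℤ) - 1) + n = y + n * (-k) := by ring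
    have := h.2.2.2.2 (x + n * (-(k:ℤ) - 1)) (y + n * (-(k:ℤ) - 1))
    rw [e1, e2] at this
    rw [← this, ih]


lemma rowrec' (h : IsInfiniteFrieze n a) {x y : ℤ} (hxy : x + 1 ≤ y) :
    a x (y + 1) = a x y * a (y - 1) (y + 1) - a x (y - 1) := by
  obtain ⟨k, hk⟩ : ∃ k : ℕ, y = x + 1 + k := ⟨(y - x - 1).toNat, by omega⟩
  have H := rowrec h k x
  have e1 : x + 1 + (k:ℤ) = y := by omega
  have e2 : x + (k:ℤ) = y - 1 := by omega
  have e3 : x + (k:ℤ) + 2 = y + 1 := by omega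
  have e4 : x + 1 + (k:ℤ) + 1 = y + 1 := by omega
  rw [e4, e1, e3, e2] at H
  exact H

lemma colrec' (h : IsInfiniteFrieze n a) {x y : ℤ} (hxy : x + 2 ≤ y) :
    a x y = a x (x + 2) * a (x + 1) y - a (x + 2) y := by
  obtain ⟨k, hk⟩ : ∃ k : ℕ, y = x + 2 + k := ⟨(y - x - 2).toNat, by omega⟩
  have H := colrec h k x
  have e1 : x + 2 + (k:ℤ) = y := by omega
  rw [e1] at H
  exact H

/-- the reindexing map deleting the positions `i + 1 + n*m` -/
def psi (N i s : ℤ) : ℤ := s + (s - i - 2) / N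

section Psi

variable {N i : ℤ}

lemma ediv_eq' {x m N : ℤ} (hN : 0 < N) (h1 : N * m ≤ x) (h2 : x < N * m + N) :
    x / N = m :=
  ediv_eq hN h1 (by linarith [show N * (m + 1) = N * m + N from by ring])

lemma psi_add (hN : 0 < N) (s : ℤ) : psi N i (s + N) = psi N i s + (N + 1) := by
  unfold psi
  have e : s + N - i - 2 = (s - i - 2) + 1 * N := by ring
  rw [e, Int.add_mul_ediv_right _ _ (ne_of_gt hN)]
  ring

lemma psi_mono (hN : 0 < N) {s t : ℤ} (hst : s ≤ t) :
    psi N i s + (t - s) ≤ psi N i t := by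
  unfold psi
  have := Int.ediv_le_ediv hN (show s - i - 2 ≤ t - i - 2 by omega)
  omega

lemma psi_step (hN : 0 < N) (s : ℤ) :
    psi N i (s + 1) = psi N i s + 1 ∨
      (psi N i (s + 1) = psi N i s + 2 ∧ ∃ m : ℤ, psi N i s + 1 = i + 1 + (N + 1) * m) := by
  have hdm := Int.mul_ediv_add_emod (s - i - 2) N
  have hr0 : 0 ≤ (s - i - 2) % N := Int.emod_nonneg _ (ne_of_gt hN)
  have hr1 : (s - i - 2) % N < N := Int.emod_lt_of_pos _ hN
  have hsucc : s + 1 - i - 2 = (s - i - 2) + 1 := by ring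
  have hexp : N * ((s - i - 2) / N + 1) = N * ((s - i - 2) / N) + N := by ring
  by_cases hc : (s - i - 2) % N = N - 1
  · right
    have he : (s - i - 2 + 1) / N = (s - i - 2) / N + 1 :=
      ediv_eq' hN (by linarith) (by linarith)
    constructor
    · unfold psi
      rw [hsucc, he]; ring
    · refine ⟨(s - i - 2) / N + 1, ?_⟩
      unfold psi
      have hexp2 : (N + 1) * ((s - i - 2) / N + 1)
          = N * ((s - i - 2) / N) + N + ((s - i - 2) / N + 1) := by ring
      linarith
  · left
    have hc2 : (s - i - 2) % N ≤ N - 2 := by omega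
    have he : (s - i - 2 + 1) / N = (s - i - 2) / N :=
      ediv_eq' hN (by linarith) (by linarith)
    unfold psi
    rw [hsucc, he]; ring

lemma psi_window (hN : 0 < N) {s : ℤ} (h1 : i + 2 ≤ s) (h2 : s ≤ i + 1 + N) :
    psi N i s = s := by
  unfold psi
  rw [ediv_eq' hN (m := 0) (by omega) (by omega)]
  simp

lemma psi_i1 (hN : 0 < N) : psi N i (i + 1) = i := by
  unfold psi
  rw [show i + 1 - i - 2 = (-1 : ℤ) from by ring,
    ediv_eq' hN (m := -1) (by omega) (by omega)]
  ring

lemma psi_top (hN : 0 < N) : psi N i (i + N + 2) = i + N + 3 := by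
  unfold psi
  rw [show i + N + 2 - i - 2 = N from by ring,
    ediv_eq' hN (m := 1) (by omega) (by omega)]
  ring

end Psi

section CutFrieze

variable {n : ℕ} {a : ℤ → ℤ → ℤ} {i : ℤ}

lemma jump_quid (hn : 2 ≤ n) (h : IsInfiniteFrieze n a) (hq1 : a i (i + 2) = 1)
    {s : ℤ} (hm : ∃ m : ℤ, psi ((n:ℤ)-1) i s + 1 = i + 1 + (((n:ℤ)-1) + 1) * m) :
    a (psi ((n:ℤ)-1) i s) (psi ((n:ℤ)-1) i s + 2) = 1 := by
  obtain ⟨m, hm⟩ := hm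
  have hc : ((n:ℤ)-1) + 1 = (n:ℤ) := by ring
  rw [hc] at hm
  have h1 : psi ((n:ℤ)-1) i s = i + (n:ℤ) * m := by linarith
  have h2 : psi ((n:ℤ)-1) i s + 2 = (i + 2) + (n:ℤ) * m := by linarith
  rw [h2, h1, per_mul h m i (i+2), hq1]

lemma hjump (hn : 2 ≤ n) (h : IsInfiniteFrieze n a) (hq1 : a i (i + 2) = 1) (s : ℤ) :
    psi ((n:ℤ)-1) i (s + 1) = psi ((n:ℤ)-1) i s + 1 ∨
      (psi ((n:ℤ)-1) i (s + 1) = psi ((n:ℤ)-1) i s + 2 ∧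
        a (psi ((n:ℤ)-1) i s) (psi ((n:ℤ)-1) i s + 2) = 1) := by
  have hN : 0 < (n:ℤ) - 1 := by omega
  rcases psi_step hN (i := i) s with h1 | ⟨h1, h2⟩
  · exact Or.inl h1
  · exact Or.inr ⟨h1, jump_quid hn h hq1 ⟨h2.choose, h2.choose_spec⟩⟩

lemma cut_frieze (hn : 2 ≤ n) (h : IsInfiniteFrieze n a) (hq1 : a i (i + 2) = 1) :
    IsInfiniteFrieze (n-1) (fun s t => a (psi ((n:ℤ)-1) i s) (psi ((n:ℤ)-1) i t)) := by
  have hN : 0 < (n:ℤ) - 1 := by omega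
  have hmono : ∀ s t : ℤ, s ≤ t → psi ((n:ℤ)-1) i s + (t - s) ≤ psi ((n:ℤ)-1) i t :=
    fun s t hst => psi_mono hN hst
  refine ⟨fun s => h.1 _, ?_, ?_, ?_, ?_⟩
  · intro s
    rcases hjump hn h hq1 s with h1 | ⟨h1, h2⟩
    · simp only [h1]
      exact h.2.1 _
    · simp only [h1]
      exact h2
  · intro s t hst
    have := hmono s t (by omega)
    exact h.2.2.1 _ _ (by omega)
  · intro s t hst
    simp only
    have hle1 : psi ((n:ℤ)-1) i (s+1) ≤ psi ((n:ℤ)-1) i t := by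
      have := hmono (s+1) t hst; omega
    rcases hjump hn h hq1 s with hs | ⟨hs, hs2⟩ <;>
      rcases hjump hn h hq1 t with ht | ⟨ht, ht2⟩ <;>
      rw [hs, ht] <;>
      set x := psi ((n:ℤ)-1) i s with hx <;> set y := psi ((n:ℤ)-1) i t with hy
    · exact h.2.2.2.1 x y (by omega)
    · -- no jump at s, jump at t
      have hxy : x + 1 ≤ y := by omega
      have R1 := rowrec' h (x := x) (y := y + 1) (by omega)
      have R2 := rowrec' h (x := x + 1) (y := y + 1) (by omega)
      have er1 : y + 1 + 1 = y + 2 := by ring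
      have er2 : y + 1 - 1 = y := by ring
      rw [er1, er2, ht2] at R1 R2
      have D := h.2.2.2.1 x y (by omega)
      linear_combination D - a (x+1) y * R1 + a x y * R2
    · -- jump at s, no jump at t
      have hxy : x + 2 ≤ y := by omega
      have C1 := colrec' h (x := x) (y := y) (by omega)
      have C2 := colrec' h (x := x) (y := y + 1) (by omega)
      rw [hs2] at C1 C2
      have D := h.2.2.2.1 (x+1) y (by omega)
      have ex : x + 1 + 1 = x + 2 := by ring
      rw [ex] at D
      linear_combination D + a (x+2) (y+1) * C1 - a (x+2) y * C2
    · -- jump at both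
      have hxy : x + 2 ≤ y := by omega
      have R1 := rowrec' h (x := x) (y := y + 1) (by omega)
      have R3 := rowrec' h (x := x + 2) (y := y + 1) (by omega)
      have er1 : y + 1 + 1 = y + 2 := by ring
      have er2 : y + 1 - 1 = y := by ring
      rw [er1, er2, ht2] at R1 R3
      have C1 := colrec' h (x := x) (y := y) (by omega)
      have C2 := colrec' h (x := x) (y := y + 1) (by omega)
      rw [hs2] at C1 C2
      have D := h.2.2.2.1 (x+1) y (by omega)
      have ex : x + 1 + 1 = x + 2 := by ring
      rw [ex] at D
      linear_combination D + a x y * R3 - a (x+2) y * R1 + a (x+2) (y+1) * C1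
        - a (x+2) y * C2
  · intro s t
    simp only
    have hcast : ((n - 1 : ℕ) : ℤ) = (n:ℤ)-1 := by omega
    rw [hcast, psi_add hN, psi_add hN, show ((n:ℤ)-1) + 1 = (n:ℤ) from by omega]
    exact h.2.2.2.2 _ _

end CutFrieze

lemma cut_main {n : ℕ} (hn : 3 ≤ n) {q : ℤ → ℤ} (hq : IsInfQuiddity n q)
    {i : ℤ} (hq1 : q i = 1) :
    ∃ q' : ℤ → ℤ, CutsTo n q q' ∧ IsInfQuiddity (n - 1) q' := by
  obtain ⟨hper, a, h, ha2⟩ := hq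
  have hN : 0 < (n:ℤ) - 1 := by omega
  have ha1 : a i (i + 2) = 1 := by rw [ha2, hq1]
  have hF := cut_frieze (by omega) h ha1
  have hqper : ∀ j : ℤ, a (psi ((n:ℤ)-1) i (j + ((n:ℤ)-1)))
      (psi ((n:ℤ)-1) i (j + ((n:ℤ)-1) + 2)) = a (psi ((n:ℤ)-1) i j) (psi ((n:ℤ)-1) i (j+2)) := by
    intro j
    rw [show j + ((n:ℤ)-1) + 2 = (j+2) + ((n:ℤ)-1) from by ring, psi_add hN, psi_add hN,
      show ((n:ℤ)-1) + 1 = (n:ℤ) from by ring]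
    exact h.2.2.2.2 _ _
  refine ⟨fun s => a (psi ((n:ℤ)-1) i s) (psi ((n:ℤ)-1) i (s+2)), ⟨i, hq1, ?_, ?_, ?_, ?_⟩, ?_, ?_⟩
  · exact hqper
  · simp only
    rw [show i+1+2 = i+3 from by ring, psi_i1 hN, psi_window hN (by omega) (by omega)]
    have R := rowrec' h (x := i) (y := i + 2) (by omega)
    rw [show i+2+1 = i+3 from by ring, show i+2-1 = i+1 from by ring] at R
    have h2 := ha2 (i+1)
    rw [show i+1+2 = i+3 from by ring] at h2
    rw [R, ha1, h.2.1 i, h2]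
    ring
  · intro j hj1 hj2
    simp only
    rw [psi_window hN (by omega) (by omega), psi_window hN (by omega) (by omega)]
    exact ha2 j
  · simp only
    rw [show i + (n:ℤ) - 1 + 2 = i + ((n:ℤ)-1) + 2 from by ring, psi_top hN,
      psi_window hN (by omega) (by omega)]
    have R := rowrec' h (x := i + (n:ℤ) - 1) (y := i + (n:ℤ) + 1) (by omega)
    rw [show i + (n:ℤ) + 1 + 1 = i + (n:ℤ) + 2 from by ring,
      show i + (n:ℤ) + 1 - 1 = i + (n:ℤ) from by ring] at R
    have hper1 := h.2.2.2.2 i (i + 2)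
    rw [show i + 2 + (n:ℤ) = i + (n:ℤ) + 2 from by ring, ha1] at hper1
    have h2 := ha2 (i + (n:ℤ) - 1)
    rw [show i + (n:ℤ) - 1 + 2 = i + (n:ℤ) + 1 from by ring] at h2
    have h3 := h.2.1 (i + (n:ℤ) - 1)
    rw [show i + (n:ℤ) - 1 + 1 = i + (n:ℤ) from by ring] at h3
    rw [show i + ((n:ℤ) - 1) + 3 = i + (n:ℤ) + 2 from by ring, R, hper1, h2, h3]
    ring
  · intro j
    have := hqper j
    rw [show ((n - 1 : ℕ) : ℤ) = (n:ℤ) - 1 from by omega]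
    exact this
  · exact ⟨fun s t => a (psi ((n:ℤ)-1) i s) (psi ((n:ℤ)-1) i t), hF, fun s => rfl⟩

def gseq (c : ℤ) : ℕ → ℤ
  | 0 => 0
  | 1 => 1
  | (k+2) => c * gseq c (k+1) - gseq c k

lemma gseq_facts {c : ℤ} (hc : 2 ≤ c) :
    ∀ k : ℕ, 0 ≤ gseq c k ∧ gseq c k + 1 ≤ gseq c (k+1) := by
  intro k
  induction k with
  | zero => exact ⟨le_refl 0, by norm_num [gseq]⟩
  | succ k ih =>
    have e : gseq c (k+2) = c * gseq c (k+1) - gseq c k := rfl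
    refine ⟨by omega, ?_⟩
    rw [e]
    nlinarith [ih.1, ih.2]

lemma gseq_det (c : ℤ) :
    ∀ k : ℕ, gseq c (k+1) * gseq c (k+1) - gseq c (k+2) * gseq c k = 1 := by
  intro k
  induction k with
  | zero => norm_num [gseq]
  | succ k ih =>
    have e : gseq c (k+3) = c * gseq c (k+2) - gseq c (k+1) := rfl
    have e2 : gseq c (k+2) = c * gseq c (k+1) - gseq c k := rfl
    rw [show k+1+1 = k+2 from rfl, show k+2+1 = k+3 from rfl, e]
    linear_combination ih + gseq c (k+2) * e2

lemma period_one {c : ℤ} (hc : 2 ≤ c) : IsInfQuiddity 1 (fun _ => c) := by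
  have gpos : ∀ k : ℕ, 0 < gseq c (k+1) := by
    intro k
    have := gseq_facts hc k
    omega
  refine ⟨fun _ => rfl, fun x y => gseq c (y - x).toNat, ⟨?_, ?_, ?_, ?_, ?_⟩, ?_⟩
  · intro s
    simp only
    rw [show (s - s).toNat = 0 from by omega]
    rfl
  · intro s
    simp only
    rw [show (s + 1 - s).toNat = 1 from by omega]
    rfl
  · intro s t hst
    simp only
    obtain ⟨k, hk⟩ : ∃ k : ℕ, (t - s).toNat = k + 1 := ⟨(t - s - 1).toNat, by omega⟩
    rw [hk]
    exact gpos k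
  · intro s t hst
    simp only
    obtain ⟨k, hk⟩ : ∃ k : ℕ, t - s = k + 1 := ⟨(t - s - 1).toNat, by omega⟩
    rw [show (t - s).toNat = k + 1 from by omega,
      show (t + 1 - (s + 1)).toNat = k + 1 from by omega,
      show (t - (s + 1)).toNat = k from by omega,
      show (t + 1 - s).toNat = k + 2 from by omega]
    exact gseq_det c k
  · intro s t
    simp only
    congr 1
    omega
  · intro s
    simp only
    rw [show (s + 2 - s).toNat = 2 from by omega]
    have e : gseq c 2 = c * gseq c 1 - gseq c 0 := rfl
    rw [e]
    norm_num [gseq]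

lemma quid_pos {n : ℕ} {q : ℤ → ℤ} (hq : IsInfQuiddity n q) (s : ℤ) : 1 ≤ q s := by
  obtain ⟨-, a, h, ha2⟩ := hq
  have := pos' h (show s + 1 ≤ s + 2 by omega)
  have h2 := ha2 s
  omega

lemma one_period_no_one {q : ℤ → ℤ} (hq : IsInfQuiddity 1 q) {s : ℤ} (h1 : q s = 1) :
    False := by
  obtain ⟨hper, a, h, ha2⟩ := hq
  have h2 : q (s + 1) = 1 := by
    have := hper s
    push_cast at this
    rw [this, h1]
  have a1 : a s (s + 2) = 1 := by rw [ha2, h1]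
  have a2 : a (s + 1) (s + 3) = 1 := by
    have := ha2 (s + 1)
    rw [show s + 1 + 2 = s + 3 from by ring] at this
    rw [this, h2]
  have D := h.2.2.2.1 s (s + 2) (by omega)
  rw [show s + 2 + 1 = s + 3 from by ring] at D
  have a3 := h.2.1 (s + 1)
  rw [show s + 1 + 1 = s + 2 from by ring] at a3
  have hpos : 0 < a s (s + 3) := pos' h (by omega)
  rw [a1, a2, a3] at D
  omega

lemma cut_two {q : ℤ → ℤ} (hq : IsInfQuiddity 2 q) {i : ℤ} (hq1 : q i = 1) :
    ∃ q' : ℤ → ℤ, CutsTo 2 q q' ∧ IsInfQuiddity 1 q' := by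
  obtain ⟨hper, a, h, ha2⟩ := hq
  have ha1 : a i (i + 2) = 1 := by rw [ha2, hq1]
  have R1 := rowrec' h (x := i) (y := i + 2) (by omega)
  rw [show i + 2 + 1 = i + 3 from by ring, show i + 2 - 1 = i + 1 from by ring] at R1
  have h2 := ha2 (i + 1)
  rw [show i + 1 + 2 = i + 3 from by ring] at h2
  rw [ha1, h2, h.2.1 i] at R1
  -- R1 : a i (i+3) = 1 * q (i+1) - 1
  have R2 := rowrec' h (x := i) (y := i + 3) (by omega)
  rw [show i + 3 + 1 = i + 4 from by ring, show i + 3 - 1 = i + 2 from by ring] at R2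
  have h3 := ha2 (i + 2)
  rw [show i + 2 + 2 = i + 4 from by ring] at h3
  have h4 : q (i + 2) = q i := by
    have := hper i
    push_cast at this
    exact this
  rw [h3, h4, hq1, ha1, R1] at R2
  -- R2 : a i (i+4) = (1 * q (i+1) - 1) * 1 - 1
  have hpos : 0 < a i (i + 4) := pos' h (by omega)
  have hc : 2 ≤ q (i + 1) - 1 := by omega
  refine ⟨fun _ => q (i + 1) - 1, ⟨i, hq1, fun j => rfl, rfl, ?_, ?_⟩, period_one hc⟩
  · intro j hj1 hj2
    exfalso
    omega
  · show q (i + 1) - 1 = q (i + (2:ℕ) - 1) - 1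
    rw [show i + ((2:ℕ):ℤ) - 1 = i + 1 from by push_cast; ring]

lemma main_aux : ∀ n : ℕ, 1 ≤ n → ∀ q : ℤ → ℤ, IsInfQuiddity n q →
    ∃ (m : ℕ) (Q : ℕ → ℤ → ℤ), m < n ∧ Q 0 = q ∧
      (∀ k < m, IsInfQuiddity (n - k) (Q k) ∧ CutsTo (n - k) (Q k) (Q (k + 1))) ∧
      IsInfQuiddity (n - m) (Q m) ∧ (∀ i : ℤ, 2 ≤ Q m i) := by
  intro n
  induction n using Nat.strong_induction_on with
  | _ n ih =>
    intro hn q hq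
    by_cases hall : ∀ s : ℤ, 2 ≤ q s
    · exact ⟨0, fun _ => q, by omega, rfl, fun k hk => absurd hk (by omega), hq, hall⟩
    · push_neg at hall
      obtain ⟨s, hs⟩ := hall
      have hq1 : q s = 1 := by have := quid_pos hq s; omega
      have hn2 : 2 ≤ n := by
        by_contra hcon
        have he : n = 1 := by omega
        rw [he] at hq
        exact one_period_no_one hq hq1
      obtain ⟨q', hcut, hq'⟩ : ∃ q', CutsTo n q q' ∧ IsInfQuiddity (n - 1) q' := by
        rcases eq_or_lt_of_le hn2 with h2 | h2
        · subst h2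
          exact cut_two hq hq1
        · exact cut_main (by omega) hq hq1
      obtain ⟨m', Q', hm', hQ0, hsteps, hfin, hge⟩ := ih (n - 1) (by omega) (by omega) q' hq'
      refine ⟨m' + 1, fun k => match k with | 0 => q | (j+1) => Q' j, by omega, rfl, ?_, ?_, ?_⟩
      · intro k hk
        match k with
        | 0 =>
          refine ⟨hq, ?_⟩
          show CutsTo (n - 0) q (Q' 0)
          rw [hQ0]
          exact hcut
        | (j+1) =>
          have hj : j < m' := by omega
          have hstep := hsteps j hj
          constructor
          · show IsInfQuiddity (n - (j + 1)) (Q' j)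
            rw [show n - (j + 1) = n - 1 - j from by omega]
            exact hstep.1
          · show CutsTo (n - (j + 1)) (Q' j) (Q' (j + 1))
            rw [show n - (j + 1) = n - 1 - j from by omega]
            exact hstep.2
      · show IsInfQuiddity (n - (m' + 1)) (Q' m')
        rw [show n - (m' + 1) = n - 1 - m' from by omega]
        exact hfin
      · exact hge

end Frieze

/-- From any quiddity sequence of an infinite periodic frieze one reaches, after finitely
many cutting reductions, a quiddity sequence all of whose entries are at least 2. -/
theorem infinite_quiddity_reduces (n : ℕ) (hn : 1 ≤ n) (q : ℤ → ℤ)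
    (hq : IsInfQuiddity n q) :
    ∃ (m : ℕ) (Q : ℕ → ℤ → ℤ), m < n ∧ Q 0 = q ∧
      (∀ k < m, IsInfQuiddity (n - k) (Q k) ∧ CutsTo (n - k) (Q k) (Q (k + 1))) ∧
      IsInfQuiddity (n - m) (Q m) ∧ (∀ i : ℤ, 2 ≤ Q m i) :=
  Frieze.main_aux n hn q hq
end

section
/- Let (s_k)_{k ≥ 0} be the sequence of growth coefficients of an infinite periodic integral frieze, with s_0 = 2 and s_1 = s. Then s_{k+2} = s · s_{k+1} - s_k for all k ≥ 0, and explicitly s_k = s^k + k ∑_{l=1}^{⌊k/2⌋} (-1)^l (1/(k-l)) · C(k-l, l) · s^{k-2l} for k ≥ 1. -/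
private def Asum (s : ℚ) (k : ℕ) : ℚ :=
  ∑ l ∈ Finset.range (k+1), (-1:ℚ)^l * (Nat.choose (k - l) l : ℚ) * s^(k - 2*l)

private lemma Asum_zero (s : ℚ) : Asum s 0 = 1 := by simp [Asum]

private lemma Asum_one (s : ℚ) : Asum s 1 = s := by
  simp [Asum, Finset.sum_range_succ]

private lemma Asum_rec (s : ℚ) (k : ℕ) : Asum s (k+2) = s * Asum s (k+1) - Asum s k := by
  have e1 : Asum s (k+2)
      = s^(k+2) + ∑ l ∈ Finset.range (k+1),
          ((-1:ℚ)^(l+1) * (Nat.choose (k+1-l) (l+1) : ℚ) * s^(k-2*l)) := by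
    unfold Asum
    rw [Finset.sum_range_succ' _ (k+2), Finset.sum_range_succ]
    have h1 : ∀ l ∈ Finset.range (k+1),
        (-1:ℚ)^(l+1) * (Nat.choose (k+2-(l+1)) (l+1) : ℚ) * s^(k+2-2*(l+1))
        = (-1:ℚ)^(l+1) * (Nat.choose (k+1-l) (l+1) : ℚ) * s^(k-2*l) := by
      intro l _
      have : k+2-(l+1) = k+1-l := by omega
      rw [this]
      have : k+2-2*(l+1) = k-2*l := by omega
      rw [this]
    rw [Finset.sum_congr rfl h1]
    have h2 : k+2-(k+1+1) = 0 := by omega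
    rw [h2]
    have h3 : Nat.choose 0 (k+1+1) = 0 := Nat.choose_eq_zero_of_lt (by omega)
    rw [h3]
    norm_num
    ring
  have e2 : s * Asum s (k+1)
      = s^(k+2) + ∑ l ∈ Finset.range (k+1),
          (s * ((-1:ℚ)^(l+1) * (Nat.choose (k-l) (l+1) : ℚ) * s^(k-1-2*l))) := by
    unfold Asum
    rw [Finset.sum_range_succ' _ (k+1), mul_add, Finset.mul_sum]
    have h1 : ∀ l ∈ Finset.range (k+1),
        s * ((-1:ℚ)^(l+1) * (Nat.choose (k+1-(l+1)) (l+1) : ℚ) * s^(k+1-2*(l+1)))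
        = s * ((-1:ℚ)^(l+1) * (Nat.choose (k-l) (l+1) : ℚ) * s^(k-1-2*l)) := by
      intro l _
      have e : k+1-(l+1) = k-l := by omega
      rw [e]
      have e' : k+1-2*(l+1) = k-1-2*l := by omega
      rw [e']
    rw [Finset.sum_congr rfl h1]
    norm_num
    ring
  rw [e1, e2]
  unfold Asum
  rw [add_sub_assoc, ← Finset.sum_sub_distrib]
  congr 1
  refine Finset.sum_congr rfl ?_
  intro l hl
  have hlk : l ≤ k := by
    have := Finset.mem_range.mp hl; omega
  have hp : k+1-l = (k-l)+1 := by omega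
  rw [hp, Nat.choose_succ_succ]
  by_cases hc : 2*l+1 ≤ k
  · have he : (k-1-2*l)+1 = k-2*l := by omega
    push_cast
    rw [show s * ((-1:ℚ)^(l+1) * (↑(Nat.choose (k-l) (l+1))) * s^(k-1-2*l))
        = (-1:ℚ)^(l+1) * (↑(Nat.choose (k-l) (l+1))) * (s^(k-1-2*l) * s) by ring,
      ← pow_succ, he]
    ring
  · have hz : Nat.choose (k-l) (l+1) = 0 := Nat.choose_eq_zero_of_lt (by omega)
    rw [hz]
    push_cast
    ring

private lemma Asum_trunc (s : ℚ) (k : ℕ) :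
    Asum s k = ∑ l ∈ Finset.Icc 0 (k/2), (-1:ℚ)^l * (Nat.choose (k-l) l : ℚ) * s^(k-2*l) := by
  unfold Asum
  refine (Finset.sum_subset ?_ ?_).symm
  · intro x hx
    simp only [Finset.mem_Icc, Finset.mem_range] at hx ⊢
    omega
  · intro x hx hx'
    simp only [Finset.mem_Icc, Finset.mem_range] at hx hx'
    have : Nat.choose (k-x) x = 0 := Nat.choose_eq_zero_of_lt (by omega)
    simp [this]

private lemma Asum_eq (s : ℚ) (k : ℕ) :
    Asum s k = s^k + ∑ l ∈ Finset.Icc 1 (k/2), (-1:ℚ)^l * (Nat.choose (k-l) l : ℚ) * s^(k-2*l) := by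
  rw [Asum_trunc]
  have h : Finset.Icc 0 (k/2) = insert 0 (Finset.Icc 1 (k/2)) := by
    ext x; simp [Finset.mem_Icc, Finset.mem_insert]; omega
  rw [h, Finset.sum_insert (by simp)]
  simp

private lemma Asum_shift (s : ℚ) (m : ℕ) :
    ∑ l ∈ Finset.Icc 1 ((m+2)/2), (-1:ℚ)^l * (Nat.choose (m+2-1-l) (l-1) : ℚ) * s^(m+2-2*l)
      = - Asum s m := by
  rw [Asum_trunc]
  have h2 : Finset.Icc 1 ((m+2)/2)
      = Finset.map ⟨fun j => j+1, fun x y h => by simpa using h⟩ (Finset.Icc 0 (m/2)) := by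
    ext x
    simp only [Finset.mem_Icc, Finset.mem_map, Function.Embedding.coeFn_mk]
    constructor
    · intro hx; exact ⟨x-1, by omega, by show x-1+1 = x; omega⟩
    · rintro ⟨y, hy, rfl⟩; show 1 ≤ y+1 ∧ y+1 ≤ (m+2)/2; omega
  rw [h2, Finset.sum_map, ← Finset.sum_neg_distrib]
  refine Finset.sum_congr rfl ?_
  intro j hj
  show (-1:ℚ)^(j+1) * (Nat.choose (m+2-1-(j+1)) (j+1-1) : ℚ) * s^(m+2-2*(j+1)) = _
  have e1 : m+2-1-(j+1) = m-j := by omega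
  have e2 : j+1-1 = j := by omega
  have e3 : m+2-2*(j+1) = m-2*j := by omega
  rw [e1, e2, e3]
  ring

private lemma rhs_eq (s : ℚ) (m : ℕ) :
    s^(m+2) + ((m+2 : ℕ) : ℚ) * ∑ l ∈ Finset.Icc 1 ((m+2)/2),
        (-1:ℚ)^l * (1 / (((m+2 : ℕ) : ℚ) - (l:ℚ))) * (Nat.choose (m+2-l) l : ℚ) * s^(m+2-2*l)
      = Asum s (m+2) - Asum s m := by
  rw [Asum_eq s (m+2), sub_eq_add_neg, ← Asum_shift s m, add_assoc,
    ← Finset.sum_add_distrib, Finset.mul_sum]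
  congr 1
  refine Finset.sum_congr rfl ?_
  intro l hl
  simp only [Finset.mem_Icc] at hl
  obtain ⟨hl1, hl2⟩ := hl
  have hlk : 2*l ≤ m+2 := by omega
  have hlt : l < m+2 := by omega
  have hcast : ((m+2 : ℕ) : ℚ) - (l:ℚ) = ((m+2-l : ℕ) : ℚ) := by
    rw [Nat.cast_sub (by omega)]
  have hne : ((m+2-l : ℕ) : ℚ) ≠ 0 := Nat.cast_ne_zero.mpr (by omega)
  have hnat : (m+2-l) * Nat.choose (m+2-l-1) (l-1) = Nat.choose (m+2-l) l * l := by
    have h := Nat.add_one_mul_choose_eq (m+2-l-1) (l-1)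
    rw [show m+2-l-1+1 = m+2-l by omega, show l-1+1 = l by omega] at h
    exact h
  have hq := congrArg (Nat.cast : ℕ → ℚ) hnat
  push_cast at hq
  have e1 : m+2-1-l = m+2-l-1 := by omega
  rw [e1]
  have hK : ((m+2 : ℕ) : ℚ) = ((m+2-l : ℕ) : ℚ) + (l : ℚ) := by rw [← hcast]; ring
  rw [hcast, hK]
  field_simp
  linear_combination (-s^(m+2-2*l)) * hq

/-- Let `a` be an infinite periodic integral frieze with minimal period `n0` (with the
conventions `a i (i+1) = 1`, `a i i = 0`, `a i (i-1) = -1` and the diamond rule), and let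
`S k` be its `k`-th growth coefficient `a i (i + k*n0 + 1) - a (i+1) (i + k*n0)` (independent
of `i`).  Then `S` satisfies `S (k+2) = S 1 * S (k+1) - S k`, and explicitly, with `s = S 1`,
`S k = s^k + k * ∑_{l=1}^{⌊k/2⌋} (-1)^l (1/(k-l)) C(k-l, l) s^(k-2l)` for `k ≥ 1`. -/
theorem growth_coefficients_recurrence (n0 : ℕ) (hn0 : 1 ≤ n0) (a : ℤ → ℤ → ℤ)
    (h0 : ∀ i : ℤ, a i i = 0) (h1 : ∀ i : ℤ, a i (i + 1) = 1)
    (hneg : ∀ i : ℤ, a i (i - 1) = -1)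
    (hpos : ∀ i j : ℤ, i + 2 ≤ j → 0 < a i j)
    (hdiamond : ∀ i j : ℤ, a i j * a (i + 1) (j + 1) - a i (j + 1) * a (i + 1) j = 1)
    (hper : ∀ i j : ℤ, a (i + n0) (j + n0) = a i j)
    (hmin : ∀ m : ℕ, 1 ≤ m → (∀ i j : ℤ, a (i + m) (j + m) = a i j) → n0 ≤ m)
    (S : ℕ → ℤ)
    (hS : ∀ (k : ℕ) (i : ℤ), S k = a i (i + k * n0 + 1) - a (i + 1) (i + k * n0)) :
    (∀ k : ℕ, S (k + 2) = S 1 * S (k + 1) - S k) ∧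
    (∀ k : ℕ, 1 ≤ k → (S k : ℚ) = (S 1 : ℚ) ^ k +
      k * ∑ l ∈ Finset.Icc 1 (k / 2),
        (-1 : ℚ) ^ l * (1 / ((k : ℚ) - l)) * (Nat.choose (k - l) l : ℚ)
          * (S 1 : ℚ) ^ (k - 2 * l)) := by
  -- entries of a row are nonzero to the right of the diagonal
  have hnz : ∀ i j : ℤ, i + 1 ≤ j → a i j ≠ 0 := by
    intro i j hj
    rcases eq_or_lt_of_le hj with h | h
    · rw [← h]
      have := h1 i
      rw [this]
      norm_num
    · exact (hpos i j (by omega)).ne'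
  -- three consecutive rows satisfy a linear relation on columns ≥ i
  have rowrec : ∀ i j : ℤ, i ≤ j → a (i-1) j + a (i+1) j = a (i-1) (i+1) * a i j := by
    intro i
    have base1 : a (i-1) i = 1 := by
      have := h1 (i-1); rwa [show i - 1 + 1 = i by ring] at this
    have basen : a (i+1) i = -1 := by
      have := hneg (i+1); rwa [show i + 1 - 1 = i by ring] at this
    have key : ∀ j : ℤ, i + 1 ≤ j → a (i-1) j + a (i+1) j = a (i-1) (i+1) * a i j := by
      refine Int.le_induction ?_ ?_
      · rw [h0 (i+1), h1 i]; ring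
      · intro j hj ih
        have d1 := hdiamond (i-1) j
        rw [show i - 1 + 1 = i by ring] at d1
        have d2 := hdiamond i j
        have hu : a i j ≠ 0 := hnz i j hj
        have hrel : (a (i-1) j + a (i+1) j - a (i-1) (i+1) * a i j) * a i (j+1)
            = (a (i-1) (j+1) + a (i+1) (j+1) - a (i-1) (i+1) * a i (j+1)) * a i j := by
          linear_combination d1 - d2
        have h0' : (a (i-1) (j+1) + a (i+1) (j+1) - a (i-1) (i+1) * a i (j+1)) * a i j = 0 := by
          rw [← hrel]
          have : a (i-1) j + a (i+1) j - a (i-1) (i+1) * a i j = 0 := by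
            rw [ih]; ring
          rw [this, zero_mul]
        rcases mul_eq_zero.mp h0' with h | h
        · linarith
        · exact absurd h hu
    intro j hj
    rcases eq_or_lt_of_le hj with h | h
    · rw [← h, h0 i, base1, basen]; ring
    · exact key j (by omega)
  -- every row above row 0 is a combination of rows 0 and 1 on columns ≥ 0
  have comb : ∀ m : ℕ, ∃ L M L' M' : ℤ,
      L * M' - M * L' = 1 ∧
      (∀ j : ℤ, (0:ℤ) ≤ j → a (0 - (m:ℤ)) j = L * a 0 j + M * a 1 j) ∧
      (∀ j : ℤ, (0:ℤ) ≤ j → a (1 - (m:ℤ)) j = L' * a 0 j + M' * a 1 j) := by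
    intro m
    induction m with
    | zero =>
      refine ⟨1, 0, 0, 1, by ring, ?_, ?_⟩ <;> intro j _ <;> norm_num
    | succ m ih =>
      obtain ⟨L, M, L', M', hdet, hr1, hr2⟩ := ih
      refine ⟨a (0 - (m:ℤ) - 1) (1 - (m:ℤ)) * L - L',
             a (0 - (m:ℤ) - 1) (1 - (m:ℤ)) * M - M', L, M,
             by linear_combination hdet, ?_, ?_⟩
      · intro j hj
        have hm : (0:ℤ) ≤ (m:ℤ) := Int.natCast_nonneg m
        have hb : (0:ℤ) - (m:ℤ) ≤ j := by omega
        have hr := rowrec (0 - (m:ℤ)) j hb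
        rw [show (0:ℤ) - (m:ℤ) + 1 = 1 - (m:ℤ) by ring] at hr
        rw [hr1 j hj, hr2 j hj] at hr
        have e1 : (0:ℤ) - ((m+1 : ℕ):ℤ) = 0 - (m:ℤ) - 1 := by push_cast; ring
        rw [e1]
        linear_combination hr
      · intro j hj
        have e : (1:ℤ) - ((m+1:ℕ):ℤ) = 0 - (m:ℤ) := by push_cast; ring
        rw [e]; exact hr1 j hj
  obtain ⟨L, M, L', M', hdet, hr1, hr2⟩ := comb n0
  -- the shift by n0 acts linearly
  have hu : ∀ j : ℤ, 0 ≤ j → a 0 (j + n0) = L * a 0 j + M * a 1 j := by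
    intro j hj
    have h := hper (0 - (n0:ℤ)) j
    rw [show (0:ℤ) - n0 + n0 = 0 by ring] at h
    rw [h]; exact hr1 j hj
  have hv : ∀ j : ℤ, 0 ≤ j → a 1 (j + n0) = L' * a 0 j + M' * a 1 j := by
    intro j hj
    have h := hper (1 - (n0:ℤ)) j
    rw [show (1:ℤ) - n0 + n0 = 1 by ring] at h
    rw [h]; exact hr2 j hj
  -- S in terms of rows 0 and 1
  have hSuv : ∀ k : ℕ, S k = a 0 ((k:ℤ) * n0 + 1) - a 1 ((k:ℤ) * n0) := by
    intro k
    have h := hS k 0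
    norm_num at h
    convert h using 3 <;> ring
  have v01 : a 0 1 = 1 := by have := h1 0; rwa [show (0:ℤ)+1 = 1 by ring] at this
  have v11 : a 1 1 = 0 := h0 1
  have v00 : a 0 0 = 0 := h0 0
  have v10 : a 1 0 = -1 := by have := hneg 1; rwa [show (1:ℤ)-1 = 0 by ring] at this
  have hnn : ∀ k : ℕ, (0:ℤ) ≤ (k:ℤ) * n0 := fun k => by positivity
  have hS1 : S 1 = L + M' := by
    have b1 := hu 1 (by norm_num)
    rw [v01, v11] at b1
    have b2 := hv 0 le_rfl
    rw [v00, v10] at b2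
    have g := hSuv 1
    rw [show ((1:ℕ):ℤ) * (n0:ℤ) + 1 = 1 + (n0:ℤ) by push_cast; ring,
       show ((1:ℕ):ℤ) * (n0:ℤ) = 0 + (n0:ℤ) by push_cast; ring, b1, b2] at g
    rw [g]; ring
  have hS0 : S 0 = 2 := by
    rw [hSuv 0]
    norm_num [v01, v10]
  -- the recurrence
  have hrec : ∀ k : ℕ, S (k+2) = S 1 * S (k+1) - S k := by
    intro k
    have e1 : ((k+1:ℕ):ℤ) * n0 = (k:ℤ)*n0 + n0 := by push_cast; ring
    have e2 : ((k+2:ℕ):ℤ) * n0 = (k:ℤ)*n0 + n0 + n0 := by push_cast; ring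
    have hP1 : a 0 ((k:ℤ)*n0 + n0) = L * a 0 ((k:ℤ)*n0) + M * a 1 ((k:ℤ)*n0) :=
      hu _ (hnn k)
    have hQ1 : a 1 ((k:ℤ)*n0 + n0) = L' * a 0 ((k:ℤ)*n0) + M' * a 1 ((k:ℤ)*n0) :=
      hv _ (hnn k)
    have hR1 : a 0 (((k:ℤ)*n0 + 1) + n0) = L * a 0 ((k:ℤ)*n0+1) + M * a 1 ((k:ℤ)*n0+1) :=
      hu _ (by positivity)
    have hT1 : a 1 (((k:ℤ)*n0 + 1) + n0) = L' * a 0 ((k:ℤ)*n0+1) + M' * a 1 ((k:ℤ)*n0+1) :=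
      hv _ (by positivity)
    have hQ2 : a 1 (((k:ℤ)*n0+n0)+n0)
        = L' * a 0 ((k:ℤ)*n0+n0) + M' * a 1 ((k:ℤ)*n0+n0) := by
      refine hv _ ?_
      have := hnn k
      positivity
    have hR2 : a 0 ((((k:ℤ)*n0+1)+n0)+n0)
        = L * a 0 (((k:ℤ)*n0+1)+n0) + M * a 1 (((k:ℤ)*n0+1)+n0) := by
      refine hu _ ?_
      have := hnn k
      positivity
    have s0 : S k = a 0 ((k:ℤ)*n0+1) - a 1 ((k:ℤ)*n0) := hSuv k
    have s1 : S (k+1) = (L * a 0 ((k:ℤ)*n0+1) + M * a 1 ((k:ℤ)*n0+1))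
        - (L' * a 0 ((k:ℤ)*n0) + M' * a 1 ((k:ℤ)*n0)) := by
      rw [hSuv (k+1), e1]
      rw [show (k:ℤ)*n0 + n0 + 1 = ((k:ℤ)*n0+1)+n0 by ring, hR1, hQ1]
    have s2 : S (k+2) = (L * a 0 (((k:ℤ)*n0+1)+n0) + M * a 1 (((k:ℤ)*n0+1)+n0))
        - (L' * a 0 ((k:ℤ)*n0+n0) + M' * a 1 ((k:ℤ)*n0+n0)) := by
      rw [hSuv (k+2), e2]
      rw [show (k:ℤ)*n0 + n0 + n0 + 1 = (((k:ℤ)*n0+1)+n0)+n0 by ring, hR2, hQ2]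
    rw [s2, s1, s0, hS1, hR1, hT1, hP1, hQ1]
    linear_combination (a 1 ((k:ℤ)*n0) - a 0 ((k:ℤ)*n0+1)) * hdet
  refine ⟨hrec, ?_⟩
  -- the explicit formula
  have claim : ∀ k : ℕ, (S (k+2) : ℚ) = Asum (S 1 : ℚ) (k+2) - Asum (S 1 : ℚ) k := by
    intro k
    induction k using Nat.twoStepInduction with
    | zero =>
      have h := hrec 0
      rw [h, hS0]
      push_cast
      rw [Asum_rec, Asum_zero, Asum_one]
      ring
    | one =>
      have h2 := hrec 0
      have h3 := hrec 1
      rw [h3, h2, hS0]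
      push_cast
      rw [Asum_rec, Asum_rec, Asum_zero, Asum_one]
      ring
    | more k ih1 ih2 =>
      have h := hrec (k+2)
      have h' := congrArg (fun z : ℤ => (z : ℚ)) h
      push_cast at h'
      have hA1 := Asum_rec (S 1 : ℚ) (k+2)
      have hA2 := Asum_rec (S 1 : ℚ) k
      simp only [show k+2+2 = k+4 from rfl, show k+2+1 = k+3 from rfl,
        show k+1+2 = k+3 from rfl] at h' ih1 ih2 hA1 hA2 ⊢
      linear_combination h' + (S 1 : ℚ) * ih2 - ih1 - hA1 + hA2
  intro k hk
  match k, hk with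
  | 1, _ =>
    rw [show (1:ℕ)/2 = 0 from rfl, Finset.Icc_eq_empty (by omega)]
    simp
  | (m+2), _ =>
    have h := claim m
    rw [h, ← rhs_eq (S 1 : ℚ) m]
end
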